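/- arXiv:1003.0072 — 6 statements merged into one kernel-verified Lean document; each statement's English description precedes it below -/
import Mathlib

section
/- Let a(n) be defined by the formal power series identity ∑_{n≥0} a(n) qⁿ = ∏_{n≥1} 1/((1 - q^{3n})(1 - qⁿ)³). If a(m) ≡ 0 (mod 625) for all m with m ≡ 13, 22, 31, or 40 (mod 45), and cφ̄3(n) is defined by ∑_{n≥0} cφ̄3(n) qⁿ = 9q ∏_{n≥1} (1-q^{9n})³/((1-q^{3n})(1-qⁿ)³), then cφ̄3(45n+23) ≡ 0 (mod 625) for all n ≥ 0. -/
section JacobiDevelopment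
open Polynomial Finset
namespace JC

noncomputable def qf (n : ℕ) : Polynomial ℤ := ∏ j ∈ Finset.Ioc 0 n, (1 - X ^ j)

def tri : ℕ → ℕ
  | 0 => 0
  | n+1 => tri n + n + 1

noncomputable def cp : ℕ → ℕ → Polynomial ℤ
  | 0, i => if i = 0 then 1 else 0
  | n+1, i => (1 + X ^ (2*n+2)) * cp n i + X ^ (n+1-i) * cp n (i-1)
      + X ^ (n+2+i) * cp n (i+1)

lemma cp_zero : ∀ n i, n < i → cp n i = 0 := by
  intro n
  induction n with
  | zero => intro i h; simp only [cp]; rw [if_neg (by omega)]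
  | succ n ih =>
    intro i h
    rw [cp, ih i (by omega), ih (i-1) (by omega), ih (i+1) (by omega)]
    ring

noncomputable def ee (n i : ℕ) : Polynomial (Polynomial ℤ) := X ^ (n+1+i) - X ^ (n-i)

noncomputable def tt (n i : ℕ) : Polynomial (Polynomial ℤ) :=
  C ((-1)^i * cp n i * X ^ (tri i)) * ee n i

-- per-term expansion
lemma tquad (n i : ℕ) (hi : i ≤ n) :
    tt n i * ((X - C (X^(n+1))) * (1 - X * C (X^(n+1)))) =
      C ((-1)^i * ((1 + X^(2*n+2)) * cp n i) * X^(tri i)) * ee (n+1) i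
      + C ((-1)^(i+1) * cp n i * X^(tri i + (n+1))) * ee (n+1) (i+1)
      + (if i = 0 then C (cp n 0 * X^(n+1)) * ee (n+1) 0
         else C ((-1)^(i-1) * cp n i * X^(tri i + (n+1))) * ee (n+1) (i-1)) := by
  obtain ⟨d, rfl⟩ : ∃ d, n = i + d := ⟨n - i, by omega⟩
  rcases i with _ | j
  · rw [if_pos rfl]
    simp only [tt, ee]
    simp only [tri, pow_zero, Nat.add_sub_cancel, Nat.zero_sub, Nat.sub_zero]
    simp only [map_mul, map_pow, map_one, map_add, map_neg]
    ring
  · rw [if_neg (by omega)]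
    simp only [tt, ee]
    have h0 : j + 1 - 1 = j := by omega
    rw [h0]
    have h1 : j + 1 + d - (j + 1) = d := by omega
    have h2 : j + 1 + d + 1 - (j + 1) = d + 1 := by omega
    have h3 : j + 1 + d + 1 - j = d + 2 := by omega
    have h5 : j + 1 + d + 1 - (j + 1 + 1) = d := by omega
    rw [h1, h2, h3, h5]
    simp only [map_mul, map_pow, map_one, map_add, map_neg]
    ring

end JC

namespace JC2
open JC
noncomputable def g1 (n i : ℕ) : Polynomial (Polynomial ℤ) :=
  C ((-1)^i * ((1 + X^(2*n+2)) * cp n i) * X^(tri i)) * ee (n+1) i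
noncomputable def g2 (n i : ℕ) : Polynomial (Polynomial ℤ) :=
  C ((-1)^i * (X^(n+1-i) * cp n (i-1)) * X^(tri i)) * ee (n+1) i
noncomputable def g3 (n i : ℕ) : Polynomial (Polynomial ℤ) :=
  C ((-1)^i * (X^(n+2+i) * cp n (i+1)) * X^(tri i)) * ee (n+1) i

lemma hsplit (n i : ℕ) : tt (n+1) i = g1 n i + g2 n i + g3 n i := by
  simp only [tt, g1, g2, g3, cp]
  simp only [map_mul, map_add, map_pow, map_one, map_neg]
  ring

lemma a2g2 (n i : ℕ) (h : i ≤ n) :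
    C ((-1)^(i+1) * cp n i * X^(tri i + (n+1))) * ee (n+1) (i+1) = g2 n (i+1) := by
  obtain ⟨d, rfl⟩ : ∃ d, n = i + d := ⟨n - i, by omega⟩
  simp only [g2, Nat.add_sub_cancel]
  have h1 : i + d + 1 - (i + 1) = d := by omega
  rw [h1, show tri (i+1) = tri i + i + 1 from rfl]
  simp only [map_mul, map_pow, map_one, map_neg]
  ring

lemma a3g2 (n : ℕ) : C (cp n 0 * X^(n+1)) * ee (n+1) 0 = g2 n 0 := by
  simp only [g2, Nat.sub_zero, Nat.zero_sub, tri]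
  simp only [map_mul, map_pow, map_one, map_neg]
  ring

lemma a3g3 (n i : ℕ) :
    C ((-1)^i * cp n (i+1) * X^(tri (i+1) + (n+1))) * ee (n+1) i = g3 n i := by
  simp only [g3, show tri (i+1) = tri i + i + 1 from rfl]
  simp only [map_mul, map_pow, map_one, map_neg]
  ring

lemma step (n : ℕ) :
    (∑ i ∈ Finset.range (n+1), tt n i) * ((X - C (X^(n+1))) * (1 - X * C (X^(n+1)))) =
    ∑ i ∈ Finset.range (n+2), tt (n+1) i := by
  have expand : (∑ i ∈ Finset.range (n+1), tt n i) * ((X - C (X^(n+1))) * (1 - X * C (X^(n+1)))) =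
      ∑ i ∈ Finset.range (n+1), (g1 n i
        + C ((-1)^(i+1) * cp n i * X^(tri i + (n+1))) * ee (n+1) (i+1)
        + (if i = 0 then C (cp n 0 * X^(n+1)) * ee (n+1) 0
           else C ((-1)^(i-1) * cp n i * X^(tri i + (n+1))) * ee (n+1) (i-1))) := by
    rw [Finset.sum_mul]
    refine Finset.sum_congr rfl fun i hi => ?_
    rw [tquad n i (Nat.lt_succ_iff.mp (Finset.mem_range.mp hi))]
    simp only [g1]
  have e1 : ∑ i ∈ Finset.range (n+2), g1 n i = ∑ i ∈ Finset.range (n+1), g1 n i := by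
    rw [Finset.sum_range_succ]
    suffices h : g1 n (n+1) = 0 by rw [h, add_zero]
    simp [g1, cp_zero n (n+1) (by omega)]
  have e2 : ∑ i ∈ Finset.range (n+1),
      C ((-1)^(i+1) * cp n i * X^(tri i + (n+1))) * ee (n+1) (i+1)
      = ∑ i ∈ Finset.range (n+1), g2 n (i+1) :=
    Finset.sum_congr rfl fun i hi => a2g2 n i (Nat.lt_succ_iff.mp (Finset.mem_range.mp hi))
  have e3 : ∑ i ∈ Finset.range (n+1),
      (if i = 0 then C (cp n 0 * X^(n+1)) * ee (n+1) 0
       else C ((-1)^(i-1) * cp n i * X^(tri i + (n+1))) * ee (n+1) (i-1))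
      = g2 n 0 + ∑ i ∈ Finset.range (n+2), g3 n i := by
    rw [Finset.sum_range_succ' (fun i => if i = 0 then C (cp n 0 * X^(n+1)) * ee (n+1) 0
       else C ((-1)^(i-1) * cp n i * X^(tri i + (n+1))) * ee (n+1) (i-1)) n]
    have h4 : ∀ i ∈ Finset.range n, (if i + 1 = 0 then C (cp n 0 * X^(n+1)) * ee (n+1) 0
       else C ((-1)^(i+1-1) * cp n (i+1) * X^(tri (i+1) + (n+1))) * ee (n+1) (i+1-1)) = g3 n i := by
      intro i _
      rw [if_neg (by omega), show i + 1 - 1 = i from rfl, a3g3]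
    rw [Finset.sum_congr rfl h4]
    have h5 : ∑ i ∈ Finset.range (n+2), g3 n i = ∑ i ∈ Finset.range n, g3 n i := by
      rw [Finset.sum_range_succ, Finset.sum_range_succ]
      have z1 : g3 n (n+1) = 0 := by simp [g3, cp_zero n (n+2) (by omega)]
      have z2 : g3 n n = 0 := by simp [g3, cp_zero n (n+1) (by omega)]
      rw [z1, z2, add_zero, add_zero]
    rw [h5, add_comm]
    congr 1
    rw [if_pos rfl]
    exact a3g2 n
  rw [expand, Finset.sum_add_distrib, Finset.sum_add_distrib, e2, e3,
    Finset.sum_congr rfl (fun i _ => hsplit n i), Finset.sum_add_distrib,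
    Finset.sum_add_distrib, ← e1]
  rw [Finset.sum_range_succ' (fun i => g2 n i) (n+1)]
  ring

end JC2

open JC JC2 in
theorem keyD : ∀ n : ℕ, (X - 1) * ∏ j ∈ Finset.Ioc 0 n, ((X - C (X^j)) * (1 - X * C (X^j)))
    = ∑ i ∈ Finset.range (n+1), tt n i
  | 0 => by
    simp [tt, ee, cp, tri]
  | (n+1) => by
    rw [Finset.prod_Ioc_succ_top (Nat.zero_le _), ← mul_assoc, keyD n, step n]

open JC JC2 in
theorem keyE (n : ℕ) : qf n ^ 2 = ∑ i ∈ Finset.range (n+1),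
    (-1)^i * ((2*i+1 : ℕ) : Polynomial ℤ) * (cp n i * X ^ (tri i)) := by
  have h := congrArg (fun p => Polynomial.eval 1 (derivative p)) (keyD n)
  simp only [derivative_mul, derivative_sub, derivative_X, derivative_one, sub_zero, one_mul,
    eval_add, eval_mul, eval_sub, eval_one, eval_X, sub_self, zero_mul, mul_zero, add_zero,
    eval_prod, eval_pow, eval_C, derivative_sum, tt, ee, derivative_C_mul, derivative_X_pow,
    eval_finset_sum, eval_natCast, one_pow, mul_one, zero_add] at h
  rw [qf, sq, ← Finset.prod_mul_distrib, h]
  refine Finset.sum_congr rfl fun i hi => ?_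
  obtain ⟨d, rfl⟩ : ∃ d, n = i + d := ⟨n - i, by have := Finset.mem_range.mp hi; omega⟩
  rw [show i + d + 1 + i = 2*i + 1 + d from by omega, show i + d - i = d from by omega]
  push_cast
  ring

namespace JC

lemma cp_diag : ∀ n, cp n n = 1 := by
  intro n
  induction n with
  | zero => simp [cp]
  | succ n ih =>
    rw [cp, cp_zero n (n+1) (by omega), cp_zero n (n+2) (by omega)]
    simpa using ih

lemma qf_succ (k : ℕ) : qf (k+1) = qf k * (1 - X ^ (k+1)) := by
  rw [qf, qf, Finset.prod_Ioc_succ_top (Nat.zero_le _)]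

lemma qf_eval0 (n : ℕ) : Polynomial.eval 0 (qf n) = 1 := by
  rw [qf, Polynomial.eval_prod]
  refine Finset.prod_eq_one fun j hj => ?_
  have hj' : j ≠ 0 := by have := Finset.mem_Ioc.mp hj; omega
  simp [zero_pow hj']

lemma qf_ne_zero (n : ℕ) : qf n ≠ 0 := fun h => by simpa [h] using qf_eval0 n

theorem prodform : ∀ n : ℕ, ∀ i ≤ n, cp n i * (qf (n - i) * qf (n+1+i)) = qf (2*n+1) := by
  intro n
  induction n with
  | zero =>
    intro i hi
    interval_cases i
    have h0 : qf 0 = 1 := by simp [qf]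
    simp [cp, h0]
  | succ n ih =>
    intro i hi
    rcases Nat.eq_or_lt_of_le hi with he | hlt
    · subst he
      rw [show cp (n+1) (n+1) = 1 from cp_diag (n+1), show n+1 - (n+1) = 0 from by omega]
      have h0 : qf 0 = 1 := by simp [qf]
      rw [h0, show 2*(n+1)+1 = n+1+1+(n+1) from by omega]
      ring
    · have hi' : i ≤ n := by omega
      obtain ⟨d, rfl⟩ : ∃ d, n = i + d := ⟨n - i, by omega⟩
      have IHi := ih i (by omega)
      rw [show i + d - i = d from by omega] at IHi
      -- expansions
      have eb : qf (i+d+2+i) = qf (i+d+1+i) * (1 - X^(i+d+2+i)) := by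
        rw [show i+d+2+i = (i+d+1+i)+1 from by omega, qf_succ]
      have h1 : cp (i+d) i * (qf (d+1) * qf (i+d+2+i)) =
          qf (2*(i+d)+1) * ((1 - X^(d+1)) * (1 - X^(i+d+2+i))) := by
        rw [qf_succ d, eb]
        linear_combination ((1 - X^(d+1)) * (1 - X^(i+d+2+i))) * IHi
      have h2 : cp (i+d) (i-1) * (qf (d+1) * qf (i+d+2+i)) =
          qf (2*(i+d)+1) * ((1 - X^(i+d+1+i)) * (1 - X^(i+d+2+i))) := by
        rcases i with _ | j
        · have e1 : qf (d+1) = qf d * (1 - X^(d+1)) := qf_succ d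
          have e2 : qf (d+2) = qf (d+1) * (1 - X^(d+2)) := qf_succ (d+1)
          simp only [Nat.zero_sub, Nat.zero_add, Nat.add_zero] at *
          rw [e2, e1]
          rw [e1] at IHi
          linear_combination ((1 - X^(d+1)) * (1 - X^(d+2))) * IHi
        · have IHm := ih j (by omega)
          rw [show j + 1 + d - j = d + 1 from by omega] at IHm
          have e2 : qf (j+1+d+2+(j+1)) = qf (j+1+d+1+j) *
              ((1 - X^(j+1+d+1+(j+1))) * (1 - X^(j+1+d+2+(j+1)))) := by
            have s1 : qf ((j+1+d+1+j)+1) = qf (j+1+d+1+j) * (1 - X^((j+1+d+1+j)+1)) := qf_succ _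
            have s2 : qf ((j+1+d+1+j)+1+1) = qf ((j+1+d+1+j)+1) * (1 - X^((j+1+d+1+j)+1+1)) :=
              qf_succ _
            rw [show j+1+d+2+(j+1) = (j+1+d+1+j)+1+1 from by omega, s2, s1,
              show (j+1+d+1+j)+1+1 = j+1+d+2+(j+1) from by omega,
              show (j+1+d+1+j)+1 = j+1+d+1+(j+1) from by omega]
            ring
          rw [show j + 1 - 1 = j from by omega, e2]
          linear_combination ((1 - X^(j+1+d+1+(j+1))) * (1 - X^(j+1+d+2+(j+1)))) * IHm
      have h3 : cp (i+d) (i+1) * (qf (d+1) * qf (i+d+2+i)) =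
          qf (2*(i+d)+1) * ((1 - X^d) * (1 - X^(d+1))) := by
        rcases d with _ | e
        · rw [cp_zero (i+0) (i+1) (by omega)]
          simp
        · have IHn := ih (i+1) (by omega)
          rw [show i + (e+1) - (i+1) = e from by omega,
            show i + (e+1) + 1 + (i+1) = i+(e+1)+2+i from by omega] at IHn
          have e1 : qf (e+1) = qf e * (1 - X^(e+1)) := qf_succ e
          have e2 : qf (e+2) = qf (e+1) * (1 - X^(e+2)) := qf_succ (e+1)
          rw [e2, e1]
          linear_combination ((1 - X^(e+1)) * (1 - X^(e+2))) * IHn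
      -- final assembly
      have hq : qf (2*(i+d)+3) = qf (2*(i+d)+1) *
          ((1 - X^(2*(i+d)+2)) * (1 - X^(2*(i+d)+3))) := by
        have s1 := qf_succ (2*(i+d)+1)
        have s2 := qf_succ (2*(i+d)+2)
        rw [show 2*(i+d)+3 = 2*(i+d)+2+1 from by omega, s2,
          show 2*(i+d)+2 = 2*(i+d)+1+1 from rfl, s1]
        ring_nf
      rw [show i + d + 1 - i = d + 1 from by omega,
        show i + d + 1 + 1 + i = i + d + 2 + i from by omega,
        show 2*(i+d+1)+1 = 2*(i+d)+3 from by omega, hq,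
        show (i+d+1 : ℕ) = (i+d)+1 from rfl, cp,
        show i + d + 1 - i = d + 1 from by omega]
      linear_combination (1 + X^(2*(i+d)+2)) * h1 + X^(d+1) * h2 + X^(i+d+2+i) * h3

end JC

namespace JC

lemma Hprod (n i : ℕ) (h : i ≤ n) : qf n * cp n i =
    ∏ j ∈ Finset.Ioc (n-i) n ∪ Finset.Ioc (n+1+i) (2*n+1), (1 - X^j) := by
  have hdisj : Disjoint (Finset.Ioc (n-i) n) (Finset.Ioc (n+1+i) (2*n+1)) := by
    rw [Finset.disjoint_left]
    intro x hx hx'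
    have := Finset.mem_Ioc.mp hx
    have := Finset.mem_Ioc.mp hx'
    omega
  rw [Finset.prod_union hdisj]
  have key := prodform n i h
  have hsplit1 : qf n = qf (n-i) * ∏ j ∈ Finset.Ioc (n-i) n, (1 - X^j) := by
    rw [qf, qf, Finset.prod_Ioc_consecutive _ (Nat.zero_le _) (by omega : n - i ≤ n)]
  have hsplit2 : qf (2*n+1) = qf (n+1+i) * ∏ j ∈ Finset.Ioc (n+1+i) (2*n+1), (1 - X^j) := by
    rw [qf, qf, Finset.prod_Ioc_consecutive _ (Nat.zero_le _) (by omega : n+1+i ≤ 2*n+1)]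
  have hne : qf (n-i) * qf (n+1+i) ≠ 0 :=
    mul_ne_zero (qf_ne_zero _) (qf_ne_zero _)
  apply mul_left_cancel₀ hne
  calc qf (n-i) * qf (n+1+i) * (qf n * cp n i)
      = (cp n i * (qf (n-i) * qf (n+1+i))) * qf n := by ring
    _ = qf (2*n+1) * qf n := by rw [key]
    _ = _ := by rw [hsplit1, hsplit2]; ring

lemma prod_one_sub (s : Finset ℕ) (d : ℕ) (h : ∀ j ∈ s, d ≤ j) :
    ∃ g : Polynomial ℤ, ∏ j ∈ s, (1 - X^j) = 1 + X^d * g := by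
  induction s using Finset.cons_induction with
  | empty => exact ⟨0, by simp⟩
  | cons a s ha ih =>
    obtain ⟨g, hg⟩ := ih fun j hj => h j (Finset.mem_cons_of_mem hj)
    have hda : d ≤ a := h a (Finset.mem_cons_self a s)
    refine ⟨g - X^(a-d) * (1 + X^d * g), ?_⟩
    rw [Finset.prod_cons, hg]
    have : (X : Polynomial ℤ)^a = X^d * X^(a-d) := by
      rw [← pow_add, show d + (a - d) = a from by omega]
    rw [this]
    ring

lemma coeff_H (n i t : ℕ) (hi : i ≤ n) (ht : 1 ≤ t) (ht' : t ≤ n - i) :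
    (qf n * cp n i).coeff t = 0 := by
  rw [Hprod n i hi]
  obtain ⟨g, hg⟩ := prod_one_sub (Finset.Ioc (n-i) n ∪ Finset.Ioc (n+1+i) (2*n+1)) (n-i+1)
    (fun j hj => by
      rcases Finset.mem_union.mp hj with hj | hj <;>
        · have := Finset.mem_Ioc.mp hj; omega)
  rw [hg, Polynomial.coeff_add, mul_comm (X^(n-i+1) : Polynomial ℤ) g,
    Polynomial.coeff_mul_X_pow', if_neg (by omega)]
  simp only [Polynomial.coeff_one, add_zero]
  rw [if_neg (by omega)]

lemma coeff_H0 (n i : ℕ) (hi : i ≤ n) : (qf n * cp n i).coeff 0 = 1 := by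
  rw [Hprod n i hi]
  obtain ⟨g, hg⟩ := prod_one_sub (Finset.Ioc (n-i) n ∪ Finset.Ioc (n+1+i) (2*n+1)) (n-i+1)
    (fun j hj => by
      rcases Finset.mem_union.mp hj with hj | hj <;>
        · have := Finset.mem_Ioc.mp hj; omega)
  rw [hg, Polynomial.coeff_add, mul_comm (X^(n-i+1) : Polynomial ℤ) g,
    Polynomial.coeff_mul_X_pow', if_neg (by omega)]
  simp

lemma tri_ge (i : ℕ) : i ≤ tri i := by
  induction i with
  | zero => simp [tri]
  | succ n ih => rw [tri]; omega

lemma tri_add5 (i : ℕ) : tri (i+5) = tri i + 5*i + 15 := by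
  show tri (i+4+1) = _
  rw [tri, show i + 4 = i+3+1 from rfl, tri, show i+3 = i+2+1 from rfl, tri,
    show i+2 = i+1+1 from rfl, tri, show (i+1 : ℕ) = i+1 from rfl, tri]
  omega

lemma tri_mod5 : ∀ i : ℕ, tri i % 5 = 0 ∨ tri i % 5 = 1 ∨ tri i % 5 = 3 := by
  intro i
  induction i using Nat.strong_induction_on with
  | _ i ih =>
    rcases Nat.lt_or_ge i 5 with h | h
    · interval_cases i <;> simp [tri]
    · obtain ⟨j, rfl⟩ : ∃ j, i = j + 5 := ⟨i - 5, by omega⟩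
      have := ih j (by omega)
      rw [tri_add5]
      omega

theorem jac_vanish (M s : ℕ) (hs : s ≤ M) (hmod : s % 5 = 2) :
    (qf M ^ 3).coeff s = 0 := by
  have hE : qf M ^ 3 = ∑ i ∈ Finset.range (M+1),
      Polynomial.C ((-1)^i * (2*(i:ℤ)+1)) * ((qf M * cp M i) * X ^ (tri i)) := by
    calc qf M ^ 3 = qf M * qf M ^ 2 := by ring
      _ = _ := by
          rw [keyE M, Finset.mul_sum]
          refine Finset.sum_congr rfl fun i _ => ?_
          have hC : (Polynomial.C ((-1)^i * (2*(i:ℤ)+1)) : Polynomial ℤ)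
              = (-1)^i * ((2*i+1 : ℕ) : Polynomial ℤ) := by
            rw [map_mul, map_pow, map_neg, map_one]
            push_cast
            simp only [map_add, map_mul, map_one, map_ofNat, Polynomial.C_eq_natCast]
            try ring
          rw [hC]
          ring
  rw [hE, Polynomial.finset_sum_coeff]
  refine Finset.sum_eq_zero fun i hi => ?_
  rw [Polynomial.coeff_C_mul, Polynomial.coeff_mul_X_pow']
  rcases le_or_gt (tri i) s with hle | hgt
  · rw [if_pos hle]
    have hine : s ≠ tri i := by
      intro hcontra
      have := tri_mod5 i
      omega
    have h1t : 1 ≤ s - tri i := by omega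
    rw [coeff_H M i (s - tri i) (Finset.mem_range_succ_iff.mp hi) h1t
      (by have := tri_ge i; omega), mul_zero]
  · rw [if_neg (by omega), mul_zero]

lemma coeff_comp9 (p : Polynomial ℤ) (e : ℕ) :
    (p.comp (X^9)).coeff e = if 9 ∣ e then p.coeff (e/9) else 0 := by
  induction p using Polynomial.induction_on' with
  | add p q hp hq =>
    rw [Polynomial.add_comp, Polynomial.coeff_add, hp, hq, Polynomial.coeff_add]
    split_ifs <;> simp
  | monomial k c =>
    rw [Polynomial.monomial_comp]
    have : (X^9 : Polynomial ℤ)^k = X^(9*k) := by rw [← pow_mul]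
    rw [this]
    have hm : (Polynomial.C c * X^(9*k)) = Polynomial.monomial (9*k) c := by
      rw [Polynomial.C_mul_X_pow_eq_monomial]
    rw [hm, Polynomial.coeff_monomial, Polynomial.coeff_monomial]
    by_cases h9 : 9 ∣ e
    · obtain ⟨s, rfl⟩ := h9
      rw [if_pos (dvd_mul_right 9 s), show 9 * s / 9 = s from by omega]
      by_cases hks : k = s
      · subst hks; simp
      · rw [if_neg (by omega), if_neg (by omega)]
    · rw [if_neg h9, if_neg (by intro h; exact h9 ⟨k, h.symm⟩)]

lemma qfcube_comp (N : ℕ) :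
    (∏ k ∈ Finset.Icc 1 N, ((1:Polynomial ℤ) - X^(9*k))^3) = (qf N ^ 3).comp (X^9) := by
  rw [show Finset.Icc 1 N = Finset.Ioc 0 N from rfl]
  rw [qf, ← Finset.prod_pow, Polynomial.prod_comp]
  refine Finset.prod_congr rfl fun j hj => ?_
  rw [Polynomial.pow_comp, Polynomial.sub_comp, Polynomial.one_comp, Polynomial.pow_comp,
    Polynomial.X_comp, ← pow_mul]

end JC

open PowerSeries

lemma mulcongr {f g u : PowerSeries ℤ} {N : ℕ}
    (h : ∀ j ≤ N, PowerSeries.coeff (R := ℤ) j f = PowerSeries.coeff (R := ℤ) j g) :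
    ∀ k ≤ N, PowerSeries.coeff (R := ℤ) k (f * u) = PowerSeries.coeff (R := ℤ) k (g * u) := by
  intro k hk
  rw [PowerSeries.coeff_mul, PowerSeries.coeff_mul]
  refine Finset.sum_congr rfl fun p hp => ?_
  have hp' := Finset.HasAntidiagonal.mem_antidiagonal.mp hp
  rw [h p.1 (by omega)]

lemma coe_prod9 (N : ℕ) :
    ((∏ k ∈ Finset.Icc 1 N, ((1:Polynomial ℤ) - Polynomial.X^(9*k))^3 : Polynomial ℤ) : PowerSeries ℤ)
      = ∏ k ∈ Finset.Icc 1 N, (1 - (PowerSeries.X : PowerSeries ℤ)^(9*k))^3 := by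
  have hmap : ∀ (s : Finset ℕ) (f : ℕ → Polynomial ℤ),
      ((∏ k ∈ s, f k : Polynomial ℤ) : PowerSeries ℤ) = ∏ k ∈ s, ((f k : Polynomial ℤ) : PowerSeries ℤ) := by
    intro s f
    induction s using Finset.cons_induction with
    | empty => simp
    | cons a s ha ih => rw [Finset.prod_cons, Polynomial.coe_mul, ih, Finset.prod_cons]
  rw [hmap]
  refine Finset.prod_congr rfl fun k _ => ?_
  rw [Polynomial.coe_pow, Polynomial.coe_sub, Polynomial.coe_one, Polynomial.coe_pow,
    Polynomial.coe_X]

theorem stmt_3' (a cbar : ℕ → ℤ)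
    (ha : ∀ N : ℕ, ∀ m ≤ N,
      PowerSeries.coeff (R := ℤ) m (PowerSeries.mk a *
        ∏ n ∈ Finset.Icc 1 N, ((1 - PowerSeries.X ^ (3 * n)) * (1 - PowerSeries.X ^ n) ^ 3))
        = PowerSeries.coeff (R := ℤ) m (1 : PowerSeries ℤ))
    (hcbar : ∀ N : ℕ, ∀ m ≤ N,
      PowerSeries.coeff (R := ℤ) m (PowerSeries.mk cbar *
        ∏ n ∈ Finset.Icc 1 N, ((1 - PowerSeries.X ^ (3 * n)) * (1 - PowerSeries.X ^ n) ^ 3))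
        = PowerSeries.coeff (R := ℤ) m (9 * PowerSeries.X * ∏ n ∈ Finset.Icc 1 N, (1 - PowerSeries.X ^ (9 * n)) ^ 3))
    (hdvd : ∀ m : ℕ, (m % 45 = 13 ∨ m % 45 = 22 ∨ m % 45 = 31 ∨ m % 45 = 40) →
      (625 : ℤ) ∣ a m) :
    ∀ n : ℕ, (625 : ℤ) ∣ cbar (45 * n + 23) := by
  intro n
  set m : ℕ := 45 * n + 23 with hm
  set P : PowerSeries ℤ :=
    ∏ k ∈ Finset.Icc 1 m, ((1 - PowerSeries.X ^ (3 * k)) * (1 - PowerSeries.X ^ k) ^ 3) with hP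
  set R : PowerSeries ℤ := ∏ k ∈ Finset.Icc 1 m, (1 - PowerSeries.X ^ (9 * k)) ^ 3 with hR
  set Q : PowerSeries ℤ := 9 * PowerSeries.X * R with hQ
  have e1 : PowerSeries.coeff (R := ℤ) m ((PowerSeries.mk a * P) * PowerSeries.mk cbar)
      = PowerSeries.coeff (R := ℤ) m ((1 : PowerSeries ℤ) * PowerSeries.mk cbar) :=
    mulcongr (ha m) m le_rfl
  have e2 : PowerSeries.coeff (R := ℤ) m ((PowerSeries.mk cbar * P) * PowerSeries.mk a)
      = PowerSeries.coeff (R := ℤ) m (Q * PowerSeries.mk a) :=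
    mulcongr (hcbar m) m le_rfl
  have e3 : (PowerSeries.mk a * P) * PowerSeries.mk cbar
      = (PowerSeries.mk cbar * P) * PowerSeries.mk a := by ring
  have key : cbar m = PowerSeries.coeff (R := ℤ) m (Q * PowerSeries.mk a) := by
    rw [← e2, ← e3, e1, one_mul, PowerSeries.coeff_mk]
  rw [key, PowerSeries.coeff_mul]
  refine Finset.dvd_sum fun p hp => ?_
  have hp' := Finset.HasAntidiagonal.mem_antidiagonal.mp hp
  rw [PowerSeries.coeff_mk]
  -- coefficient of Q
  rcases p with ⟨i, j⟩
  simp only at hp' ⊢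
  match i, hp' with
  | 0, hp' =>
    have : PowerSeries.coeff (R := ℤ) 0 Q = 0 := by
      rw [hQ, PowerSeries.coeff_zero_eq_constantCoeff, map_mul, map_mul]
      simp
    rw [this, zero_mul]
    exact dvd_zero _
  | (i'+1), hp' =>
    have hQi : PowerSeries.coeff (R := ℤ) (i'+1) Q = 9 * PowerSeries.coeff (R := ℤ) i' R := by
      rw [hQ, show (9 : PowerSeries ℤ) * PowerSeries.X * R = PowerSeries.X * (9 * R) from by ring,
        PowerSeries.coeff_succ_X_mul]
      rw [show (9 : PowerSeries ℤ) * R = (9:ℤ) • R from by rw [zsmul_eq_mul]; norm_num]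
      rw [map_smul, smul_eq_mul]
    have hRcoeff : PowerSeries.coeff (R := ℤ) i' R = if 9 ∣ i' then (JC.qf m ^ 3).coeff (i'/9) else 0 := by
      rw [hR, ← coe_prod9, Polynomial.coeff_coe, JC.qfcube_comp, JC.coeff_comp9]
    by_cases h9 : 9 ∣ i'
    · obtain ⟨s, rfl⟩ := h9
      by_cases h5 : s % 5 = 2
      · have : (JC.qf m ^ 3).coeff (9*s/9) = 0 := by
          rw [show 9*s/9 = s from by omega]
          exact JC.jac_vanish m s (by omega) h5
        rw [hQi, hRcoeff, if_pos (dvd_mul_right 9 s), this, mul_zero, zero_mul]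
        exact dvd_zero _
      · have hj : j % 45 = 13 ∨ j % 45 = 22 ∨ j % 45 = 31 ∨ j % 45 = 40 := by omega
        exact Dvd.dvd.mul_left (hdvd j hj) _
    · rw [hQi, hRcoeff, if_neg h9, mul_zero, zero_mul]
      exact dvd_zero _

end JacobiDevelopment

open PowerSeries Finset

/-- Let `a(n)` be defined by `∑ a(n) qⁿ = ∏_{n≥1} 1/((1-q^{3n})(1-qⁿ)³)` (equivalently,
`(∑ a(n) qⁿ) · ∏_{n≥1} (1-q^{3n})(1-qⁿ)³ = 1`, encoded coefficientwise via truncated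
products).  If `a(m) ≡ 0 (mod 625)` for all `m ≡ 13, 22, 31, 40 (mod 45)`, and `cφ̄3` is
defined by `∑ cφ̄3(n) qⁿ = 9q ∏_{n≥1} (1-q^{9n})³/((1-q^{3n})(1-qⁿ)³)`, then
`cφ̄3(45n+23) ≡ 0 (mod 625)` for all `n ≥ 0`. -/
theorem stmt_3 (a cbar : ℕ → ℤ)
    (ha : ∀ N : ℕ, ∀ m ≤ N,
      coeff (R := ℤ) m (PowerSeries.mk a *
        ∏ n ∈ Finset.Icc 1 N, ((1 - X ^ (3 * n)) * (1 - X ^ n) ^ 3))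
        = coeff (R := ℤ) m (1 : PowerSeries ℤ))
    (hcbar : ∀ N : ℕ, ∀ m ≤ N,
      coeff (R := ℤ) m (PowerSeries.mk cbar *
        ∏ n ∈ Finset.Icc 1 N, ((1 - X ^ (3 * n)) * (1 - X ^ n) ^ 3))
        = coeff (R := ℤ) m (9 * X * ∏ n ∈ Finset.Icc 1 N, (1 - X ^ (9 * n)) ^ 3))
    (hdvd : ∀ m : ℕ, (m % 45 = 13 ∨ m % 45 = 22 ∨ m % 45 = 31 ∨ m % 45 = 40) →
      (625 : ℤ) ∣ a m) :
    ∀ n : ℕ, (625 : ℤ) ∣ cbar (45 * n + 23) := by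
  exact stmt_3' a cbar ha hcbar hdvd
end

section
/- Let a(n) be defined by ∑_{n≥0} a(n) qⁿ = ∏_{n≥1} 1/((1 - q^{3n})(1 - qⁿ)³) as a formal power series over ℤ. If a(m) ≡ 0 (mod 625) for all m ≡ 13, 22, 31, 40 (mod 45), then for cφ̄3 defined by ∑_{n≥0} cφ̄3(n) qⁿ = 9q ∏_{n≥1} (1-q^{9n})³/((1-q^{3n})(1-qⁿ)³), one has cφ̄3(45n+41) ≡ 0 (mod 625) for all n ≥ 0. -/
namespace Jac
open Polynomial Finset

def Tri : ℕ → ℕ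
  | 0 => 0
  | (j+1) => Tri j + (j+1)

noncomputable def Pq (s : ℕ) : Polynomial ℤ := ∏ i ∈ Icc 1 s, (1 - X^i)
noncomputable def Pr (n s : ℕ) : Polynomial ℤ := ∏ i ∈ Icc (n+s+1) (2*n), (1 - X^i)
noncomputable def F (n : ℕ) : Polynomial (Polynomial ℤ) :=
  (∏ i ∈ Icc 1 n, (1 - C (X^i) * X)) * ∏ i ∈ range n, (X - C (X^i))
noncomputable def ph (n k : ℕ) : Polynomial ℤ := (F n).coeff k

lemma prod_Icc_bot {M : Type*} [CommMonoid M] (a b : ℕ) (f : ℕ → M) (h : a ≤ b) :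
    ∏ i ∈ Icc a b, f i = f a * ∏ i ∈ Icc (a+1) b, f i := by
  rw [← Finset.Ico_add_one_right_eq_Icc, Finset.prod_eq_prod_Ico_succ_bot (by omega), Finset.Ico_add_one_right_eq_Icc]

lemma F_succ (n : ℕ) : F (n+1) = F n * ((1 - C (X^(n+1) : Polynomial ℤ) * X) * (X - C (X^n))) := by
  unfold F
  rw [Finset.prod_Icc_succ_top (by omega), Finset.prod_range_succ]
  ring

lemma Mexp (a b : Polynomial ℤ) :
    (1 - C a * X) * (X - C b) = -(C b) + (1 + C (a*b)) * X + (-(C a)) * X^2 := by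
  rw [map_mul]; ring

lemma coeff2 (f : Polynomial (Polynomial ℤ)) (a b : Polynomial ℤ) (d : ℕ) :
    (f * ((1 - C a * X) * (X - C b))).coeff (d+2)
      = f.coeff (d+2) * (-b) + f.coeff (d+1) * (1 + a*b) + f.coeff d * (-a) := by
  rw [Mexp, mul_add, mul_add, ← mul_assoc, ← mul_assoc]
  have h1 : f * -(C b) = f * C (-b) := by simp
  have h2 : f * (1 + C (a*b)) = f * C (1 + a*b) := by simp
  have h3 : f * -(C a) = f * C (-a) := by simp
  rw [h1, h2, h3, coeff_add, coeff_add, coeff_mul_C]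
  have e2 : d + 2 = (d+1) + 1 := by omega
  rw [e2, coeff_mul_X, coeff_mul_C]
  have e3 : d + 1 + 1 = d + 2 := by omega
  rw [e3, coeff_mul_X_pow, coeff_mul_C]

lemma coeff1 (f : Polynomial (Polynomial ℤ)) (a b : Polynomial ℤ) :
    (f * ((1 - C a * X) * (X - C b))).coeff 1
      = f.coeff 1 * (-b) + f.coeff 0 * (1 + a*b) := by
  rw [Mexp, mul_add, mul_add, ← mul_assoc, ← mul_assoc]
  have h1 : f * -(C b) = f * C (-b) := by simp
  have h2 : f * (1 + C (a*b)) = f * C (1 + a*b) := by simp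
  have h3 : f * -(C a) = f * C (-a) := by simp
  rw [h1, h2, h3, coeff_add, coeff_add, coeff_mul_C]
  rw [show (1:ℕ) = 0 + 1 from rfl, coeff_mul_X, coeff_mul_C]
  rw [show (0:ℕ) + 1 = 1 from rfl, coeff_mul_X_pow']
  simp

lemma coeff0 (f : Polynomial (Polynomial ℤ)) (a b : Polynomial ℤ) :
    (f * ((1 - C a * X) * (X - C b))).coeff 0 = f.coeff 0 * (-b) := by
  rw [Mexp, mul_add, mul_add, ← mul_assoc, ← mul_assoc]
  have h1 : f * -(C b) = f * C (-b) := by simp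
  have h2 : f * (1 + C (a*b)) = f * C (1 + a*b) := by simp
  have h3 : f * -(C a) = f * C (-a) := by simp
  rw [h1, h2, h3, coeff_add, coeff_add, coeff_mul_C, coeff_mul_X_pow']
  simp [coeff_mul_X]

lemma rec2 (n d : ℕ) : ph (n+1) (d+2)
    = ph n (d+2) * (-(X^n)) + ph n (d+1) * (1 + X^(2*n+1)) + ph n d * (-(X^(n+1))) := by
  unfold ph
  rw [F_succ, coeff2]
  rw [show (X:Polynomial ℤ)^(n+1) * X^n = X^(2*n+1) by rw [← pow_add]; congr 1; omega]

lemma rec1 (n : ℕ) : ph (n+1) 1 = ph n 1 * (-(X^n)) + ph n 0 * (1 + X^(2*n+1)) := by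
  unfold ph
  rw [F_succ, coeff1]
  rw [show (X:Polynomial ℤ)^(n+1) * X^n = X^(2*n+1) by rw [← pow_add]; congr 1; omega]

lemma rec0 (n : ℕ) : ph (n+1) 0 = ph n 0 * (-(X^n)) := by
  unfold ph; rw [F_succ, coeff0]

lemma natDegree_F (n : ℕ) : (F n).natDegree ≤ 2 * n := by
  unfold F
  apply le_trans (natDegree_mul_le)
  have h1 : (∏ i ∈ Icc 1 n, (1 - C ((X:Polynomial ℤ)^i) * X)).natDegree ≤ n := by
    apply le_trans (natDegree_prod_le _ _)
    apply le_trans (Finset.sum_le_card_nsmul _ _ 1 ?_)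
    · simp [Nat.card_Icc]
    · intro i _
      apply le_trans (natDegree_sub_le _ _)
      simp [natDegree_C_mul_le]
  have h2 : (∏ i ∈ range n, ((X:Polynomial (Polynomial ℤ)) - C ((X:Polynomial ℤ)^i))).natDegree ≤ n := by
    apply le_trans (natDegree_prod_le _ _)
    apply le_trans (Finset.sum_le_card_nsmul _ _ 1 ?_)
    · simp
    · intro i _
      apply le_trans (natDegree_sub_le _ _)
      simp
  omega

lemma ph_eq_zero (n k : ℕ) (h : 2*n < k) : ph n k = 0 :=
  coeff_eq_zero_of_natDegree_lt (lt_of_le_of_lt (natDegree_F n) h)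


lemma Tri_succ (j : ℕ) : Tri (j+1) = Tri j + (j+1) := rfl
lemma Pq_zero : Pq 0 = 1 := by simp [Pq]
lemma Pq_succ (s : ℕ) : Pq (s+1) = Pq s * (1 - X^(s+1)) := Finset.prod_Icc_succ_top (by omega) _
lemma Pq_add2 (e : ℕ) : Pq (e+2) = Pq e * ((1 - X^(e+1)) * (1 - X^(e+2))) := by
  rw [show e+2 = (e+1)+1 by omega, Pq_succ, Pq_succ]; ring
lemma Pr_one (n s : ℕ) (h : n ≤ s) : Pr n s = 1 := by
  unfold Pr; rw [Finset.Icc_eq_empty (by omega)]; simp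
lemma Pr_bot (n s : ℕ) (h : s + 1 ≤ n) : Pr n s = (1 - X^(n+s+1)) * Pr n (s+1) := by
  unfold Pr
  rw [prod_Icc_bot _ _ _ (by omega), show n+s+1+1 = n+(s+1)+1 by omega]
lemma Pr_succ_n (n s : ℕ) (h : s + 1 ≤ n) :
    Pr (n+1) s = Pr n (s+1) * ((1 - X^(2*n+1)) * (1 - X^(2*n+2))) := by
  unfold Pr
  rw [show 2*(n+1) = (2*n+1)+1 by omega, Finset.prod_Icc_succ_top (by omega),
    show (2*n+1) = (2*n)+1 by omega, Finset.prod_Icc_succ_top (by omega),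
    show n+1+s+1 = n+(s+1)+1 by omega]
  ring


lemma F_zero : F 0 = 1 := by simp [F]
lemma pq1 : Pq 1 = 1 - X^1 := by
  rw [show (1:ℕ) = 0+1 by omega, Pq_succ, Pq_zero]; ring

lemma KL (n : ℕ) :
    (∀ j, j ≤ n → ph n (n+j) * Pq (n-j) = (-1)^j * X^(Tri j) * Pr n j)
    ∧ (∀ s, 1 ≤ s → s ≤ n → ph n (n-s) * Pq (n-s) = (-1)^s * X^(Tri (s-1)) * Pr n s) := by
  induction n with
  | zero =>
    constructor
    · intro j hj
      interval_cases j
      simp [ph, F_zero, Pq_zero, Pr_one, Tri]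
    · intro s h1 h2; omega
  | succ n ih =>
    obtain ⟨kp, km⟩ := ih
    constructor
    · intro j hj
      by_cases hA : j = n+1
      · -- case A : j = n+1
        subst hA
        rw [show n+1+(n+1) = (2*n)+2 by omega, rec2, show (n+1)-(n+1) = 0 by omega, Pq_zero,
          Pr_one (n+1) (n+1) le_rfl]
        have h0 := kp n le_rfl
        rw [show n-n = 0 by omega, Pq_zero, Pr_one n n le_rfl, show n+n = 2*n by omega] at h0
        have z1 : ph n (2*n+2) = 0 := ph_eq_zero _ _ (by omega)
        have z2 : ph n (2*n+1) = 0 := ph_eq_zero _ _ (by omega)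
        rw [z1, z2, Tri_succ]
        linear_combination (-(X^(n+1)) : Polynomial ℤ) * h0
      · have hj' : j ≤ n := by omega
        by_cases hj0 : j = 0
        · subst hj0
          by_cases hn0 : n = 0
          · -- case B4 : n = 0, j = 0
            subst hn0
            rw [show 0+1+0 = 0+1 by omega, rec1, show 0+1-0 = 0+1 by omega, Pq_succ, Pq_zero]
            have e0 : ph 0 0 = 1 := by simp [ph, F_zero]
            have e1 : ph 0 1 = 0 := by simp [ph, F_zero, coeff_one]
            have e2 : Pr (0+1) 0 = 1 - X^2 := by
              unfold Pr; norm_num [Finset.Icc_self]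
            rw [e0, e1, e2, show Tri 0 = 0 from rfl]
            ring
          · -- case B3 : j = 0, n ≥ 1
            obtain ⟨m, rfl⟩ : ∃ m, n = m+1 := ⟨n-1, by omega⟩
            rw [show m+1+1+0 = m+2 by omega, rec2, show m+1+1-0 = m+2 by omega, Pq_add2 m]
            have h1 := kp 1 (by omega)
            rw [show m+1+1 = m+2 by omega, show m+1-1 = m by omega, show Tri 1 = 1 from rfl] at h1
            have h2 := kp 0 (by omega)
            rw [show m+1+0 = m+1 by omega, show m+1-0 = m+1 by omega, Pq_succ,
              show Tri 0 = 0 from rfl, Pr_bot (m+1) 0 (by omega), show (0:ℕ)+1 = 1 from rfl] at h2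
            have h3 := km 1 (by omega) (by omega)
            rw [show m+1-1 = m by omega, show Tri 0 = 0 from rfl] at h3
            rw [show Tri 0 = 0 from rfl, Pr_succ_n (m+1) 0 (by omega), show (0:ℕ)+1 = 1 from rfl]
            linear_combination (-(X^(m+1)) * ((1-X^(m+1))*(1-X^(m+2))) : Polynomial ℤ) * h1
              + ((1+X^(2*(m+1)+1)) * (1-X^(m+2)) : Polynomial ℤ) * h2
              + (-(X^(m+2)) * ((1-X^(m+1))*(1-X^(m+2))) : Polynomial ℤ) * h3
        · by_cases hjn : j = n
          · -- case B2 : j = n ≥ 1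
            subst hjn
            obtain ⟨m, rfl⟩ : ∃ m, j = m+1 := ⟨j-1, by omega⟩
            rw [show m+1+1+(m+1) = (2*m+1)+2 by omega, rec2,
              show m+1+1-(m+1) = 1 by omega, pq1]
            have z1 : ph (m+1) (2*m+1+2) = 0 := ph_eq_zero _ _ (by omega)
            have h2 := kp (m+1) le_rfl
            rw [show m+1+(m+1) = 2*m+1+1 by omega, show m+1-(m+1) = 0 by omega, Pq_zero,
              Pr_one (m+1) (m+1) le_rfl] at h2
            have h3 := kp m (by omega)
            rw [show m+1+m = 2*m+1 by omega, show m+1-m = 1 by omega, pq1,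
              Pr_bot (m+1) m (by omega), Pr_one (m+1) (m+1) le_rfl] at h3
            rw [Tri_succ] at h2
            rw [Pr_bot (m+1+1) (m+1) (by omega), Pr_one (m+1+1) (m+1+1) le_rfl, Tri_succ]
            rw [z1]
            linear_combination ((1+X^(2*(m+1)+1)) * (1-X^1) : Polynomial ℤ) * h2
              + (-(X^(m+2)) : Polynomial ℤ) * h3
          · -- case B1 : 1 ≤ j ≤ n-1
            obtain ⟨i, rfl⟩ : ∃ i, j = i+1 := ⟨j-1, by omega⟩
            obtain ⟨e, rfl⟩ : ∃ e, n = i+e+2 := ⟨n-i-2, by omega⟩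
            rw [show i+e+2+1+(i+1) = (i+e+2+i)+2 by omega, rec2,
              show i+e+2+1-(i+1) = e+2 by omega, Pq_add2 e]
            have t1 : Tri (i+1) = Tri i + (i+1) := Tri_succ i
            have t2 : Tri (i+2) = Tri i + (2*i+3) := by
              rw [show i+2 = (i+1)+1 by omega, Tri_succ, Tri_succ]; omega
            have h1 := kp (i+2) (by omega)
            rw [show i+e+2+(i+2) = i+e+2+i+2 by omega, show i+e+2-(i+2) = e by omega, t2] at h1
            have h2 := kp (i+1) (by omega)
            rw [show i+e+2+(i+1) = i+e+2+i+1 by omega, show i+e+2-(i+1) = e+1 by omega,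
              Pq_succ, t1, Pr_bot (i+e+2) (i+1) (by omega), show i+1+1 = i+2 by omega] at h2
            have h3 := kp i (by omega)
            rw [show i+e+2-i = e+2 by omega, Pq_add2 e,
              Pr_bot (i+e+2) i (by omega), Pr_bot (i+e+2) (i+1) (by omega),
              show i+1+1 = i+2 by omega] at h3
            rw [t1, Pr_succ_n (i+e+2) (i+1) (by omega), show i+1+1 = i+2 by omega]
            linear_combination (-(X^(i+e+2)) * ((1-X^(e+1))*(1-X^(e+2))) : Polynomial ℤ) * h1
              + ((1+X^(2*(i+e+2)+1)) * (1-X^(e+2)) : Polynomial ℤ) * h2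
              + (-(X^(i+e+2+1)) : Polynomial ℤ) * h3
    · intro s hs1 hs2
      by_cases hC : s = n+1
      · -- case C : s = n+1
        subst hC
        by_cases hn0 : n = 0
        · -- C0 : n = 0, s = 1
          subst hn0
          rw [show 0+1-(0+1) = 0 by omega, rec0, Pq_zero, Pr_one (0+1) (0+1) le_rfl,
            show Tri 0 = 0 from rfl]
          have e0 : ph 0 0 = 1 := by simp [ph, F_zero]
          rw [e0]; ring
        · obtain ⟨m, rfl⟩ : ∃ m, n = m+1 := ⟨n-1, by omega⟩
          rw [show m+1+1-(m+1+1) = 0 by omega, rec0, Pq_zero, Pr_one (m+1+1) (m+1+1) le_rfl,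
            show m+1+1-1 = m+1 by omega, Tri_succ]
          have h0 := km (m+1) (by omega) le_rfl
          rw [show m+1-(m+1) = 0 by omega, Pq_zero, Pr_one (m+1) (m+1) le_rfl,
            show m+1-1 = m by omega] at h0
          linear_combination (-(X^(m+1)) : Polynomial ℤ) * h0
      · have hs' : s ≤ n := by omega
        by_cases hD : s = n
        · -- case D : s = n
          subst hD
          by_cases hn1 : s = 1
          · -- D1 : n = s = 1
            subst hn1
            rw [show 1+1-1 = 0+1 by omega, rec1, show 0+1 = 1 from rfl, pq1,
              show 1-1 = 0 by omega, show Tri 0 = 0 from rfl]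
            have pr21 : Pr (1+1) 1 = 1 - X^4 := by
              unfold Pr; norm_num [Finset.Icc_self]
            rw [pr21]
            have h1 := kp 0 (by omega)
            rw [show 1+0 = 1 by omega, show 1-0 = 1 by omega, pq1, show Tri 0 = 0 from rfl] at h1
            have pr10 : Pr 1 0 = 1 - X^2 := by
              unfold Pr; norm_num [Finset.Icc_self]
            rw [pr10] at h1
            have h2 := km 1 le_rfl le_rfl
            rw [show 1-1 = 0 by omega, Pq_zero, Pr_one 1 1 le_rfl, show Tri 0 = 0 from rfl] at h2
            linear_combination (-(X^1) : Polynomial ℤ) * h1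
              + ((1+X^(2*1+1)) * (1 - X^1) : Polynomial ℤ) * h2
          · -- D2 : s = n ≥ 2
            obtain ⟨m, rfl⟩ : ∃ m, s = m+2 := ⟨s-2, by omega⟩
            rw [show m+2+1-(m+2) = 0+1 by omega, rec1, show (0:ℕ)+1 = 1 from rfl, pq1,
              show m+2-1 = m+1 by omega, Tri_succ]
            have h1 := km (m+1) (by omega) (by omega)
            rw [show m+2-(m+1) = 1 by omega, pq1, show m+1-1 = m by omega,
              Pr_bot (m+2) (m+1) (by omega), Pr_one (m+2) (m+1+1) (by omega)] at h1
            have h2 := km (m+2) (by omega) le_rfl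
            rw [show m+2-(m+2) = 0 by omega, Pq_zero, Pr_one (m+2) (m+2) le_rfl,
              show m+2-1 = m+1 by omega, Tri_succ] at h2
            rw [Pr_bot (m+2+1) (m+2) (by omega), Pr_one (m+2+1) (m+2+1) (by omega)]
            linear_combination (-(X^(m+2)) : Polynomial ℤ) * h1
              + ((1+X^(2*(m+2)+1)) * (1 - X^1) : Polynomial ℤ) * h2
        · -- s ≤ n-1
          by_cases hE : s = 1
          · -- E1 : s = 1, n ≥ 2
            subst hE
            obtain ⟨m, rfl⟩ : ∃ m, n = m+2 := ⟨n-2, by omega⟩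
            rw [show m+2+1-1 = m+2 by omega, rec2, Pq_add2 m,
              show 1-1 = 0 by omega, show Tri 0 = 0 from rfl]
            have h1 := kp 0 (by omega)
            rw [show m+2+0 = m+2 by omega, show m+2-0 = m+2 by omega, Pq_add2 m,
              show Tri 0 = 0 from rfl, Pr_bot (m+2) 0 (by omega), show (0:ℕ)+1 = 1 from rfl,
              Pr_bot (m+2) 1 (by omega), show (1:ℕ)+1 = 2 from rfl] at h1
            have h2 := km 1 le_rfl (by omega)
            rw [show m+2-1 = m+1 by omega, Pq_succ, show 1-1 = 0 by omega,
              show Tri 0 = 0 from rfl, Pr_bot (m+2) 1 (by omega),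
              show (1:ℕ)+1 = 2 from rfl] at h2
            have h3 := km 2 (by omega) (by omega)
            rw [show m+2-2 = m by omega, show 2-1 = 1 by omega,
              show Tri 1 = 1 from rfl] at h3
            rw [Pr_succ_n (m+2) 1 (by omega), show (1:ℕ)+1 = 2 from rfl]
            linear_combination (-(X^(m+2)) : Polynomial ℤ) * h1
              + ((1+X^(2*(m+2)+1)) * (1-X^(m+2)) : Polynomial ℤ) * h2
              + (-(X^(m+2+1)) * ((1-X^(m+1))*(1-X^(m+2))) : Polynomial ℤ) * h3
          · -- E2 : 2 ≤ s ≤ n-1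
            obtain ⟨g, rfl⟩ : ∃ g, s = g+2 := ⟨s-2, by omega⟩
            obtain ⟨e, rfl⟩ : ∃ e, n = g+e+3 := ⟨n-g-3, by omega⟩
            have t1 : Tri (g+1) = Tri g + (g+1) := Tri_succ g
            have t2 : Tri (g+2) = Tri g + (2*g+3) := by
              rw [show g+2 = (g+1)+1 by omega, Tri_succ, Tri_succ]; omega
            rw [show g+e+3+1-(g+2) = e+2 by omega, rec2, Pq_add2 e,
              show g+2-1 = g+1 by omega, t1]
            have h1 := km (g+1) (by omega) (by omega)
            rw [show g+e+3-(g+1) = e+2 by omega, Pq_add2 e, show g+1-1 = g by omega,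
              Pr_bot (g+e+3) (g+1) (by omega), show g+1+1 = g+2 by omega,
              Pr_bot (g+e+3) (g+2) (by omega), show g+2+1 = g+3 by omega] at h1
            have h2 := km (g+2) (by omega) (by omega)
            rw [show g+e+3-(g+2) = e+1 by omega, Pq_succ, show g+2-1 = g+1 by omega, t1,
              Pr_bot (g+e+3) (g+2) (by omega), show g+2+1 = g+3 by omega] at h2
            have h3 := km (g+3) (by omega) (by omega)
            rw [show g+e+3-(g+3) = e by omega, show g+3-1 = g+2 by omega, t2] at h3
            rw [Pr_succ_n (g+e+3) (g+2) (by omega), show g+2+1 = g+3 by omega]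
            linear_combination (-(X^(g+e+3)) : Polynomial ℤ) * h1
              + ((1+X^(2*(g+e+3)+1)) * (1-X^(e+2)) : Polynomial ℤ) * h2
              + (-(X^(g+e+3+1)) * ((1-X^(e+1))*(1-X^(e+2))) : Polynomial ℤ) * h3



lemma Tri_ge (j : ℕ) : j ≤ Tri j := by
  induction j with
  | zero => simp [Tri]
  | succ j ih => rw [Tri_succ]; omega

lemma Tri_mod5 (j : ℕ) : Tri j % 5 = 0 ∨ Tri j % 5 = 1 ∨ Tri j % 5 = 3 := by
  induction j using Nat.strong_induction_on with
  | _ j ih =>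
    match j with
    | 0 => left; rfl
    | 1 => right; left; rfl
    | 2 => right; right; rfl
    | 3 => right; left; rfl
    | 4 => left; rfl
    | (j+5) =>
      have h := ih j (by omega)
      have e : Tri (j+5) = Tri j + (5*j+15) := by
        rw [show j+5 = (j+4)+1 by omega, Tri_succ, show j+4 = (j+3)+1 by omega, Tri_succ,
          show j+3 = (j+2)+1 by omega, Tri_succ, show j+2 = (j+1)+1 by omega, Tri_succ,
          Tri_succ]
        omega
      omega

lemma sumA (n : ℕ) :
    Pq (n+1) * Pq n = ∑ k ∈ range (2*(n+1)+2), (k : Polynomial ℤ) * ph (n+1) k := by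
  have hrange : ∏ i ∈ range (n+1), ((X : Polynomial (Polynomial ℤ)) - C ((X:Polynomial ℤ)^i))
      = (X - 1) * ∏ i ∈ Icc 1 n, ((X : Polynomial (Polynomial ℤ)) - C ((X:Polynomial ℤ)^i)) := by
    have : range (n+1) = Icc 0 n := by
      rw [← Finset.Ico_add_one_right_eq_Icc, Nat.Ico_zero_eq_range]
    rw [this, prod_Icc_bot 0 n _ (Nat.zero_le n)]
    norm_num
  have hF : F (n+1) = (X - 1) *
      ((∏ i ∈ Icc 1 (n+1), (1 - C ((X:Polynomial ℤ)^i) * X)) *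
        ∏ i ∈ Icc 1 n, ((X : Polynomial (Polynomial ℤ)) - C ((X:Polynomial ℤ)^i))) := by
    unfold F; rw [hrange]; ring
  have hde : (derivative (F (n+1))).eval 1 = Pq (n+1) * Pq n := by
    rw [hF, derivative_mul]
    simp only [derivative_sub, derivative_X, derivative_one, sub_zero, one_mul, eval_add,
      eval_mul, eval_sub, eval_X, eval_one, eval_prod, eval_C, sub_self, zero_mul,
      mul_zero, add_zero, mul_one]
    unfold Pq
    rfl
  have hdeg : (derivative (F (n+1))).natDegree < 2*(n+1)+1 := by
    have h1 := Polynomial.natDegree_derivative_le (F (n+1))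
    have h2 := natDegree_F (n+1)
    omega
  have heval := Polynomial.eval_eq_sum_range' hdeg (1 : Polynomial ℤ)
  rw [heval] at hde
  rw [show 2*(n+1)+2 = (2*(n+1)+1)+1 by omega, Finset.sum_range_succ', ← hde]
  simp only [Nat.cast_zero, zero_mul, add_zero]
  apply Finset.sum_congr rfl
  intro i _
  rw [Polynomial.coeff_derivative]
  push_cast
  unfold ph
  ring

lemma shape_mul (c : ℕ) (A B : Polynomial ℤ) (hA : ∃ u, A = 1 + X^c * u)
    (hB : ∃ u, B = 1 + X^c * u) : ∃ u, A * B = 1 + X^c * u := by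
  obtain ⟨u, rfl⟩ := hA
  obtain ⟨v, rfl⟩ := hB
  exact ⟨u + v + X^c * (u * v), by ring⟩

lemma shape_single (c e : ℕ) (h : c ≤ e) : ∃ u, (1 - X^e : Polynomial ℤ) = 1 + X^c * u := by
  refine ⟨-(X^(e-c)), ?_⟩
  rw [mul_neg, ← pow_add, show c + (e - c) = e by omega]
  ring

lemma shape_prod (S : Finset ℕ) (f : ℕ → ℕ) (c : ℕ) (h : ∀ i ∈ S, c ≤ f i) :
    ∃ u, ∏ i ∈ S, (1 - X^(f i) : Polynomial ℤ) = 1 + X^c * u := by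
  classical
  induction S using Finset.induction_on with
  | empty => exact ⟨0, by simp⟩
  | @insert a S ha ih =>
    rw [Finset.prod_insert ha]
    exact shape_mul c _ _ (shape_single c (f a) (h a (Finset.mem_insert_self a S)))
      (ih (fun i hi => h i (Finset.mem_insert_of_mem hi)))

lemma term_coeff_zero (a : ℤ) (t c m : ℕ) (Z u : Polynomial ℤ) (hZ : Z = 1 + X^c * u)
    (hne : t ≠ m) (hlt : t ≤ m → m - t < c) : (C a * (X^t * Z)).coeff m = 0 := by
  have hre : C a * (X^t * Z) = (C a * Z) * X^t := by ring
  by_cases hle : t ≤ m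
  · rw [hre, coeff_mul_X_pow', if_pos hle, hZ]
    rw [mul_add, mul_one, coeff_add, coeff_C, if_neg (by omega)]
    rw [show C a * (X^c * u) = (C a * u) * X^c by ring, coeff_mul_X_pow',
      if_neg (by have := hlt hle; omega)]
    simp
  · rw [hre, coeff_mul_X_pow', if_neg (by omega)]

lemma Pq_split (a b : ℕ) (h : a ≤ b) :
    Pq b = Pq a * ∏ i ∈ Icc (a+1) b, (1 - X^i : Polynomial ℤ) := by
  unfold Pq
  rw [← Finset.Ico_add_one_right_eq_Icc, ← Finset.Ico_add_one_right_eq_Icc, ← Finset.Ico_add_one_right_eq_Icc,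
    ← Finset.prod_Ico_consecutive _ (by omega : 1 ≤ a+1) (by omega : a+1 ≤ b+1)]

lemma jacobi_coeff (m N : ℕ) (h5 : m % 5 = 4) (hN : m < N) : ((Pq N)^3).coeff m = 0 := by
  obtain ⟨n, rfl⟩ : ∃ n, N = n+1 := ⟨N-1, by omega⟩
  have hm : m ≤ n := by omega
  obtain ⟨kp, km⟩ := KL (n+1)
  have key : (Pq (n+1))^3 = ∑ k ∈ range (2*(n+1)+2),
      ((k : Polynomial ℤ) * ph (n+1) k) * (Pq n * (1 - X^(n+1))^2) := by
    rw [← Finset.sum_mul, ← sumA n, Pq_succ n]; ring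
  rw [key, finset_sum_coeff]
  apply Finset.sum_eq_zero
  intro k hk
  rw [Finset.mem_range] at hk
  by_cases hk1 : k = 2*(n+1)+1
  · subst hk1
    rw [ph_eq_zero (n+1) (2*(n+1)+1) (by omega)]
    simp
  · have hk2 : k ≤ 2*(n+1) := by omega
    -- triangular numbers are never ≡ 4 mod 5
    have htri : ∀ j : ℕ, Tri j ≠ m := by
      intro j hj
      rcases Tri_mod5 j with h | h | h <;> omega
    by_cases hkn : n+1 ≤ k
    · -- upper case : k = (n+1) + j
      obtain ⟨j, rfl⟩ : ∃ j, k = (n+1) + j := ⟨k - (n+1), by omega⟩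
      have hjn : j ≤ n+1 := by omega
      have hKL := kp j hjn
      -- V = Pq (n+1-j) * W
      have hsplit : Pq (n+1) = Pq (n+1-j) * ∏ i ∈ Icc (n+1-j+1) (n+1), (1 - X^i : Polynomial ℤ) := by
        apply Pq_split _ _ (by omega)
      set W : Polynomial ℤ :=
        (∏ i ∈ Icc (n+1-j+1) (n+1), (1 - X^i : Polynomial ℤ)) * (1 - X^(n+1)) with hW
      have hV : Pq n * (1 - X^(n+1))^2 = Pq (n+1-j) * W := by
        rw [hW]
        have : Pq n * (1 - X^(n+1))^2 = Pq (n+1) * (1 - X^(n+1)) := by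
          rw [Pq_succ]; ring
        rw [this, hsplit]; ring
      have hterm : (((n+1)+j : ℕ) : Polynomial ℤ) * ph (n+1) ((n+1)+j)
            * (Pq n * (1 - X^(n+1))^2)
          = C ((-1 : ℤ)^j * ((n : ℤ)+1+j)) * (X^(Tri j) * (Pr (n+1) j * W)) := by
        have hC : (C ((-1 : ℤ)^j * ((n : ℤ)+1+j)) : Polynomial ℤ)
            = (-1)^j * (((n+1)+j : ℕ) : Polynomial ℤ) := by
          simp only [C_mul, C_pow, C_neg, C_add, C_1, C_eq_natCast]
          push_cast
          ring
        rw [hC, hV]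
        calc (((n+1)+j : ℕ) : Polynomial ℤ) * ph (n+1) ((n+1)+j) * (Pq (n+1-j) * W)
            = (((n+1)+j : ℕ) : Polynomial ℤ) * (ph (n+1) ((n+1)+j) * Pq (n+1-j)) * W := by ring
          _ = _ := by rw [hKL]; ring
      rw [hterm]
      -- shape of Z
      have hZ : ∃ u, Pr (n+1) j * W = 1 + X^(n+1-j) * u := by
        apply shape_mul
        · unfold Pr
          apply shape_prod _ _ _ (fun i hi => ?_)
          rw [Finset.mem_Icc] at hi; omega
        · rw [hW]
          apply shape_mul
          · apply shape_prod _ _ _ (fun i hi => ?_)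
            rw [Finset.mem_Icc] at hi; omega
          · exact shape_single _ _ (by omega)
      obtain ⟨u, hu⟩ := hZ
      exact term_coeff_zero _ _ _ _ _ u hu (htri j)
        (fun hle => by have := Tri_ge j; omega)
    · -- lower case : k = (n+1) - s
      obtain ⟨s, hs⟩ : ∃ s, s = (n+1) - k := ⟨(n+1) - k, rfl⟩
      have hs1 : 1 ≤ s := by omega
      have hs2 : s ≤ n+1 := by omega
      have hk3 : k = (n+1) - s := by omega
      have hKL := km s hs1 hs2
      rw [← hk3] at hKL
      have hsplit : Pq n = Pq ((n+1)-s) * ∏ i ∈ Icc ((n+1)-s+1) n, (1 - X^i : Polynomial ℤ) := by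
        apply Pq_split _ _ (by omega)
      have hqk : Pq ((n+1)-s) = Pq k := by rw [hk3]
      set W : Polynomial ℤ :=
        (∏ i ∈ Icc ((n+1)-s+1) n, (1 - X^i : Polynomial ℤ)) * (1 - X^(n+1))^2 with hW
      have hterm : ((k : ℕ) : Polynomial ℤ) * ph (n+1) k * (Pq n * (1 - X^(n+1))^2)
          = C ((-1 : ℤ)^s * (k : ℤ)) * (X^(Tri (s-1)) * (Pr (n+1) s * W)) := by
        have hC : (C ((-1 : ℤ)^s * (k : ℤ)) : Polynomial ℤ)
            = (-1)^s * ((k : ℕ) : Polynomial ℤ) := by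
          simp only [C_mul, C_pow, C_neg, C_1, C_eq_natCast]
        rw [hC, hW, hsplit, hqk]
        calc ((k : ℕ) : Polynomial ℤ) * ph (n+1) k *
              (Pq k * (∏ i ∈ Icc ((n+1)-s+1) n, (1 - X^i : Polynomial ℤ)) * (1 - X^(n+1))^2)
            = ((k : ℕ) : Polynomial ℤ) * (ph (n+1) k * Pq k) *
              ((∏ i ∈ Icc ((n+1)-s+1) n, (1 - X^i : Polynomial ℤ)) * (1 - X^(n+1))^2) := by ring
          _ = _ := by rw [hKL]; ring
      rw [hterm]
      have hZ : ∃ u, Pr (n+1) s * W = 1 + X^((n+1)-s+1) * u := by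
        apply shape_mul
        · unfold Pr
          apply shape_prod _ _ _ (fun i hi => ?_)
          rw [Finset.mem_Icc] at hi; omega
        · rw [hW]
          apply shape_mul
          · apply shape_prod _ _ _ (fun i hi => ?_)
            rw [Finset.mem_Icc] at hi; omega
          · rw [pow_two]
            apply shape_mul <;> exact shape_single _ _ (by omega)
      obtain ⟨u, hu⟩ := hZ
      exact term_coeff_zero _ _ _ _ _ u hu (htri (s-1))
        (fun hle => by have := Tri_ge (s-1); omega)

lemma comp9 (p : Polynomial ℤ) (i : ℕ) :
    (p.eval₂ C (X^9)).coeff i = if 9 ∣ i then p.coeff (i/9) else 0 := by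
  induction p using Polynomial.induction_on' with
  | add p q hp hq =>
    rw [eval₂_add, coeff_add, hp, hq, coeff_add]
    split_ifs <;> simp
  | monomial n a =>
    rw [eval₂_monomial, ← pow_mul, coeff_C_mul, coeff_X_pow, coeff_monomial]
    by_cases h1 : i = 9*n
    · subst h1
      rw [if_pos rfl, if_pos (dvd_mul_right 9 n), if_pos (by omega), mul_one]
    · rw [if_neg h1, mul_zero]
      by_cases h2 : 9 ∣ i
      · rw [if_pos h2, if_neg (by omega)]
      · rw [if_neg h2]

lemma JP9 (N : ℕ) : ((∏ i ∈ Icc 1 N, ((1:Polynomial ℤ) - X^i)^3).eval₂ C (X^9))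
    = ∏ i ∈ Icc 1 N, ((1:Polynomial ℤ) - X^(9*i))^3 := by
  rw [← Polynomial.coe_eval₂RingHom, map_prod]
  apply Finset.prod_congr rfl
  intro i _
  rw [map_pow, map_sub, map_one]
  rw [Polynomial.coe_eval₂RingHom, eval₂_X_pow, ← pow_mul]

end Jac

open PowerSeries Finset

lemma PS_cancel (D P : PowerSeries ℤ) (N : ℕ) (hP : constantCoeff (R := ℤ) P = 1)
    (h : ∀ j, j ≤ N → coeff (R := ℤ) j (D * P) = 0) : ∀ m, m ≤ N → coeff (R := ℤ) m D = 0 := by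
  intro m
  induction m using Nat.strong_induction_on with
  | _ m ih =>
    intro hm
    have h0 := h m hm
    rw [PowerSeries.coeff_mul, Finset.sum_eq_single (m, 0)] at h0
    · rwa [PowerSeries.coeff_zero_eq_constantCoeff, hP, mul_one] at h0
    · intro b hb hbne
      rw [Finset.HasAntidiagonal.mem_antidiagonal] at hb
      have hb1 : b.1 < m := by
        by_contra hcon
        push_neg at hcon
        exact hbne (Prod.ext (by omega) (by omega))
      rw [ih b.1 hb1 (by omega), zero_mul]
    · intro hne
      exact absurd (Finset.HasAntidiagonal.mem_antidiagonal.mpr (by simp)) hne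

lemma PS_mulcong (U B B' : PowerSeries ℤ) (N : ℕ) (h : ∀ i, i ≤ N → coeff (R := ℤ) i B = coeff (R := ℤ) i B') :
    ∀ j, j ≤ N → coeff (R := ℤ) j (U * B) = coeff (R := ℤ) j (U * B') := by
  intro j hj
  rw [PowerSeries.coeff_mul, PowerSeries.coeff_mul]
  apply Finset.sum_congr rfl
  intro b hb
  rw [Finset.HasAntidiagonal.mem_antidiagonal] at hb
  rw [h b.2 (by omega)]

theorem stmt_4' (a cbar : ℕ → ℤ)
    (ha : ∀ N : ℕ, ∀ m ≤ N,
      coeff (R := ℤ) m (PowerSeries.mk a *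
        ∏ n ∈ Finset.Icc 1 N, ((1 - X ^ (3 * n)) * (1 - X ^ n) ^ 3))
        = coeff (R := ℤ) m (1 : PowerSeries ℤ))
    (hcbar : ∀ N : ℕ, ∀ m ≤ N,
      coeff (R := ℤ) m (PowerSeries.mk cbar *
        ∏ n ∈ Finset.Icc 1 N, ((1 - X ^ (3 * n)) * (1 - X ^ n) ^ 3))
        = coeff (R := ℤ) m (9 * X * ∏ n ∈ Finset.Icc 1 N, (1 - X ^ (9 * n)) ^ 3))
    (hdvd : ∀ m : ℕ, (m % 45 = 13 ∨ m % 45 = 22 ∨ m % 45 = 31 ∨ m % 45 = 40) →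
      (625 : ℤ) ∣ a m) :
    ∀ n : ℕ, (625 : ℤ) ∣ cbar (45 * n + 41) := by
  intro u
  set N : ℕ := 45*u+41 with hNdef
  set P : PowerSeries ℤ := ∏ n ∈ Finset.Icc 1 N, ((1 - X^(3*n)) * (1 - X^n)^3) with hP
  set Q : PowerSeries ℤ := ∏ n ∈ Finset.Icc 1 N, (1 - X^(9*n))^3 with hQ
  have hPc : constantCoeff (R := ℤ) P = 1 := by
    rw [hP, map_prod]
    apply Finset.prod_eq_one
    intro i hi
    rw [Finset.mem_Icc] at hi
    have h1 : (3*i) ≠ 0 := by omega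
    have h2 : i ≠ 0 := by omega
    simp [map_mul, map_sub, map_pow, PowerSeries.constantCoeff_X, zero_pow h1, zero_pow h2]
  have hDP : ∀ j, j ≤ N → coeff (R := ℤ) j ((PowerSeries.mk cbar - 9*X*Q*PowerSeries.mk a) * P) = 0 := by
    intro j hj
    rw [sub_mul, map_sub]
    have e1 := hcbar N j hj
    have e2 : coeff (R := ℤ) j (9*X*Q*PowerSeries.mk a*P) = coeff (R := ℤ) j (9*X*Q) := by
      have hre : (9:PowerSeries ℤ)*X*Q*PowerSeries.mk a*P = 9*X*Q*(PowerSeries.mk a*P) := by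
        ring
      rw [hre, PS_mulcong (9*X*Q) (PowerSeries.mk a * P) 1 N (fun i hi => ha N i hi) j hj,
        mul_one]
    rw [e1, e2, sub_self]
  have hD := PS_cancel _ P N hPc hDP N le_rfl
  rw [map_sub, sub_eq_zero] at hD
  rw [PowerSeries.coeff_mk] at hD
  have e3 : (9:PowerSeries ℤ)*X*Q*PowerSeries.mk a = X * (PowerSeries.C (R := ℤ) 9*(Q*PowerSeries.mk a)) := by
    rw [show (9 : PowerSeries ℤ) = PowerSeries.C (R := ℤ) 9 from (map_ofNat (PowerSeries.C (R := ℤ)) 9).symm]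
    ring
  rw [e3, hNdef, show 45*u+41 = (45*u+40)+1 by omega, PowerSeries.coeff_succ_X_mul,
    PowerSeries.coeff_C_mul, PowerSeries.coeff_mul] at hD
  rw [hNdef, show 45*u+41 = (45*u+40)+1 by omega, hD]
  apply Dvd.dvd.mul_left
  apply Finset.dvd_sum
  intro p hp
  rw [Finset.HasAntidiagonal.mem_antidiagonal] at hp
  rw [PowerSeries.coeff_mk]
  -- coefficients of Q
  have hQco : Q = ((∏ i ∈ Icc 1 N, ((1:Polynomial ℤ) - Polynomial.X^(9*i))^3 : Polynomial ℤ) :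
      PowerSeries ℤ) := by
    rw [hQ, ← Polynomial.coeToPowerSeries.ringHom_apply,
      map_prod Polynomial.coeToPowerSeries.ringHom]
    apply Finset.prod_congr rfl
    intro i _
    simp
  have hQc : ∀ i : ℕ, coeff (R := ℤ) i Q
      = if 9 ∣ i then ((Jac.Pq N)^3).coeff (i/9) else 0 := by
    intro i
    rw [hQco, Polynomial.coeff_coe, ← Jac.JP9, Jac.comp9]
    unfold Jac.Pq
    rw [Finset.prod_pow]
  by_cases h9 : 9 ∣ p.1
  · by_cases h36 : p.1 % 45 = 36
    · -- Jacobi vanishing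
      have : coeff (R := ℤ) p.1 Q = 0 := by
        rw [hQc, if_pos h9, Jac.jacobi_coeff (p.1/9) N (by omega) (by omega)]
      rw [this, zero_mul]
      exact dvd_zero _
    · -- hdvd case
      have hj45 : p.2 % 45 = 13 ∨ p.2 % 45 = 22 ∨ p.2 % 45 = 31 ∨ p.2 % 45 = 40 := by
        omega
      exact Dvd.dvd.mul_left (hdvd p.2 hj45) _
  · have : coeff (R := ℤ) p.1 Q = 0 := by rw [hQc, if_neg h9]
    rw [this, zero_mul]
    exact dvd_zero _

/-- Let `a(n)` be defined by `∑ a(n) qⁿ = ∏_{n≥1} 1/((1-q^{3n})(1-qⁿ)³)` (equivalently,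
`(∑ a(n) qⁿ) · ∏_{n≥1} (1-q^{3n})(1-qⁿ)³ = 1`, encoded coefficientwise via truncated
products).  If `a(m) ≡ 0 (mod 625)` for all `m ≡ 13, 22, 31, 40 (mod 45)`, and `cφ̄3` is
defined by `∑ cφ̄3(n) qⁿ = 9q ∏_{n≥1} (1-q^{9n})³/((1-q^{3n})(1-qⁿ)³)`, then
`cφ̄3(45n+41) ≡ 0 (mod 625)` for all `n ≥ 0`. -/
theorem stmt_4 (a cbar : ℕ → ℤ)
    (ha : ∀ N : ℕ, ∀ m ≤ N,
      coeff (R := ℤ) m (PowerSeries.mk a *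
        ∏ n ∈ Finset.Icc 1 N, ((1 - X ^ (3 * n)) * (1 - X ^ n) ^ 3))
        = coeff (R := ℤ) m (1 : PowerSeries ℤ))
    (hcbar : ∀ N : ℕ, ∀ m ≤ N,
      coeff (R := ℤ) m (PowerSeries.mk cbar *
        ∏ n ∈ Finset.Icc 1 N, ((1 - X ^ (3 * n)) * (1 - X ^ n) ^ 3))
        = coeff (R := ℤ) m (9 * X * ∏ n ∈ Finset.Icc 1 N, (1 - X ^ (9 * n)) ^ 3))
    (hdvd : ∀ m : ℕ, (m % 45 = 13 ∨ m % 45 = 22 ∨ m % 45 = 31 ∨ m % 45 = 40) →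
      (625 : ℤ) ∣ a m) :
    ∀ n : ℕ, (625 : ℤ) ∣ cbar (45 * n + 41) := by
  exact stmt_4' a cbar ha hcbar hdvd
end

section
/- For any prime l and integer s ≥ 1, the formal power series ∏_{n≥1} (1 - qⁿ)^{l^s} / (1 - q^{ln})^{l^{s-1}} is congruent to 1 modulo l^s, i.e., all coefficients of positive powers of q are divisible by l^s. -/
open PowerSeries Finset

private lemma aux_dvd_prod_sub_prod {R : Type*} [CommRing R] (d : R) {ι : Type*}
    (s : Finset ι) (f g : ι → R) (h : ∀ i ∈ s, d ∣ f i - g i) :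
    d ∣ ∏ i ∈ s, f i - ∏ i ∈ s, g i := by
  classical
  induction s using Finset.induction_on with
  | empty => simp
  | @insert a t hx ih =>
    rw [Finset.prod_insert hx, Finset.prod_insert hx]
    have h1 : d ∣ f a - g a := h a (Finset.mem_insert_self a t)
    have h2 : d ∣ ∏ i ∈ t, f i - ∏ i ∈ t, g i :=
      ih fun i hi => h i (Finset.mem_insert_of_mem hi)
    have e : f a * ∏ i ∈ t, f i - g a * ∏ i ∈ t, g i
        = f a * (∏ i ∈ t, f i - ∏ i ∈ t, g i) + (f a - g a) * ∏ i ∈ t, g i := by ring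
    rw [e]
    exact dvd_add (h2.mul_left _) (h1.mul_right _)

private lemma aux_base {R : Type*} [CommRing R] (l : ℕ) (hl : l.Prime) (x : R) :
    (l : R) ∣ (1 - x) ^ l - (1 - x ^ l) := by
  have hexp : (1 - x) ^ l = ∑ k ∈ Finset.range (l + 1), (-x) ^ k * (l.choose k : R) := by
    rw [show (1 - x : R) = -x + 1 by ring]
    simpa using add_pow (-x) 1 l
  have hl1 : l - 1 + 1 = l := Nat.succ_pred_eq_of_pos hl.pos
  rw [hexp, Finset.sum_range_succ]
  rw [show Finset.range l = Finset.range (l - 1 + 1) by rw [hl1], Finset.sum_range_succ']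
  simp only [pow_zero, one_mul, Nat.choose_zero_right, Nat.cast_one, Nat.choose_self]
  have hmid : (l : R) ∣ ∑ i ∈ Finset.range (l - 1), (-x) ^ (i + 1) * (l.choose (i + 1) : R) := by
    apply Finset.dvd_sum
    intro i hi
    rw [Finset.mem_range] at hi
    have : l ∣ l.choose (i + 1) :=
      hl.dvd_choose_self (Nat.succ_ne_zero i) (by omega)
    exact Dvd.dvd.mul_left (by exact_mod_cast (Nat.cast_dvd_cast this : (l:R) ∣ _)) _
  have hend : (l : R) ∣ (-x) ^ l + x ^ l := by
    rcases hl.eq_two_or_odd' with h2 | hodd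
    · subst h2; exact ⟨x ^ 2, by rw [neg_pow]; ring⟩
    · rw [hodd.neg_pow]; simp
  have e : ∑ i ∈ Finset.range (l - 1), (-x) ^ (i + 1) * (l.choose (i + 1) : R) + 1
        + (-x) ^ l * 1 - (1 - x ^ l)
      = (∑ i ∈ Finset.range (l - 1), (-x) ^ (i + 1) * (l.choose (i + 1) : R))
        + ((-x) ^ l + x ^ l) := by ring
  rw [e]
  exact dvd_add hmid hend

private lemma aux_pow_lift {R : Type*} [CommRing R] (l : ℕ) (a b : R)
    (h : (l : R) ∣ a - b) : ∀ k : ℕ, (l : R) ^ (k + 1) ∣ a ^ l ^ k - b ^ l ^ k := by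
  intro k
  induction k with
  | zero => simpa using h
  | succ k ih =>
    have hA : (l : R) ∣ a ^ l ^ k - b ^ l ^ k :=
      dvd_trans (dvd_pow_self _ (Nat.succ_ne_zero k)) ih
    set A := a ^ l ^ k with hAdef
    set B := b ^ l ^ k with hBdef
    have hgeom : (∑ i ∈ Finset.range l, A ^ i * B ^ (l - 1 - i)) * (A - B) = A ^ l - B ^ l :=
      geom_sum₂_mul A B l
    have hsum : (l : R) ∣ ∑ i ∈ Finset.range l, A ^ i * B ^ (l - 1 - i) := by
      have e : ∀ i ∈ Finset.range l,
          A ^ i * B ^ (l - 1 - i) = (A ^ i - B ^ i) * B ^ (l - 1 - i) + B ^ (l - 1) := by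
        intro i hi
        rw [Finset.mem_range] at hi
        have : i + (l - 1 - i) = l - 1 := by omega
        rw [sub_mul, ← pow_add, this]; ring
      rw [Finset.sum_congr rfl e, Finset.sum_add_distrib, Finset.sum_const, Finset.card_range,
        nsmul_eq_mul]
      refine dvd_add (Finset.dvd_sum fun i _ => ?_) (Dvd.intro _ rfl)
      exact ((hA.trans (sub_dvd_pow_sub_pow A B i)).mul_right _)
    have hpow : a ^ l ^ (k + 1) - b ^ l ^ (k + 1) = A ^ l - B ^ l := by
      rw [hAdef, hBdef, ← pow_mul, ← pow_mul, ← pow_succ]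
    rw [hpow, ← hgeom, pow_succ']
    exact mul_dvd_mul hsum ih

/-- For any prime `l` and integer `s ≥ 1`, the formal power series
`F = ∏_{n≥1} (1-qⁿ)^{l^s} / (1-q^{ln})^{l^{s-1}}` (encoded coefficientwise via truncated
products) is congruent to `1` modulo `l^s` in `ℤ[[q]]`. -/
theorem stmt_5 (l s : ℕ) (hl : l.Prime) (hs : 1 ≤ s) (F : PowerSeries ℤ)
    (hF : ∀ N : ℕ, ∀ m ≤ N,
      coeff (R := ℤ) m (F * ∏ n ∈ Finset.Icc 1 N, (1 - X ^ (l * n)) ^ (l ^ (s - 1)))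
        = coeff (R := ℤ) m (∏ n ∈ Finset.Icc 1 N, (1 - X ^ n) ^ (l ^ s))) :
    ∀ m : ℕ, ((l : ℤ) ^ s) ∣ coeff (R := ℤ) m (F - 1) := by
  intro m
  induction m using Nat.strong_induction_on with
  | _ m ih =>
  set B : PowerSeries ℤ := ∏ n ∈ Finset.Icc 1 m, (1 - X ^ (l * n)) ^ (l ^ (s - 1)) with hBdef
  set A : PowerSeries ℤ := ∏ n ∈ Finset.Icc 1 m, (1 - X ^ n) ^ (l ^ s) with hAdef
  -- A ≡ B mod l^s in ℤ[[X]]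
  have hAB : ((l : PowerSeries ℤ)) ^ s ∣ A - B := by
    apply aux_dvd_prod_sub_prod
    intro n _
    have hbase : (l : PowerSeries ℤ) ∣ (1 - X ^ n) ^ l - (1 - (X ^ n) ^ l) :=
      aux_base l hl _
    have hlift := aux_pow_lift l _ _ hbase (s - 1)
    have hs1 : s - 1 + 1 = s := Nat.succ_pred_eq_of_pos hs
    rw [hs1] at hlift
    have e1 : ((1 - X ^ n : PowerSeries ℤ) ^ l) ^ l ^ (s - 1) = (1 - X ^ n) ^ l ^ s := by
      rw [← pow_mul, ← pow_succ', hs1]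
    have e2 : (1 - (X ^ n : PowerSeries ℤ) ^ l) = 1 - X ^ (l * n) := by
      rw [← pow_mul, mul_comm]
    rwa [e1, e2] at hlift
  -- coefficient-level divisibility from power series divisibility
  have hcoeff : ∀ k : ℕ, ((l : ℤ) ^ s) ∣ coeff (R := ℤ) k (A - B) := by
    intro k
    obtain ⟨g, hg⟩ := hAB
    have : (l : PowerSeries ℤ) ^ s = C (R := ℤ) ((l : ℤ) ^ s) := by
      rw [map_pow, map_natCast]
    rw [hg, this, coeff_C_mul]
    exact Dvd.intro _ rfl
  -- key: l^s ∣ coeff m ((F - 1) * B)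
  have hkey : ((l : ℤ) ^ s) ∣ coeff (R := ℤ) m ((F - 1) * B) := by
    have h1 : coeff (R := ℤ) m (F * B) = coeff (R := ℤ) m A := hF m m le_rfl
    have : coeff (R := ℤ) m ((F - 1) * B) = coeff (R := ℤ) m A - coeff (R := ℤ) m B := by
      rw [sub_mul, one_mul, map_sub, h1]
    rw [this, ← map_sub]
    exact hcoeff m
  -- expand the product coefficient
  rw [coeff_mul] at hkey
  have hmem : ((m, 0) : ℕ × ℕ) ∈ Finset.HasAntidiagonal.antidiagonal m := by
    simp [Finset.mem_antidiagonal]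
  have hB0 : coeff (R := ℤ) 0 B = 1 := by
    rw [coeff_zero_eq_constantCoeff, hBdef, map_prod]
    apply Finset.prod_eq_one
    intro n hn
    rw [Finset.mem_Icc] at hn
    have hln : l * n ≠ 0 := Nat.mul_ne_zero hl.pos.ne' (by omega)
    rw [map_pow, map_sub, map_one, map_pow, constantCoeff_X, zero_pow hln, sub_zero, one_pow]
  have hrest : ((l : ℤ) ^ s) ∣
      ∑ p ∈ (Finset.HasAntidiagonal.antidiagonal m).erase (m, 0), coeff (R := ℤ) p.1 (F - 1) * coeff (R := ℤ) p.2 B := by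
    apply Finset.dvd_sum
    intro p hp
    have hp1 := Finset.mem_of_mem_erase hp
    have hpne := Finset.ne_of_mem_erase hp
    rw [Finset.HasAntidiagonal.mem_antidiagonal] at hp1
    have hlt : p.1 < m := by
      rcases Nat.lt_or_ge p.1 m with h | h
      · exact h
      · exfalso; apply hpne
        have h1 : p.1 = m := by omega
        have h2 : p.2 = 0 := by omega
        exact Prod.ext h1 h2
    exact (ih p.1 hlt).mul_right _
  have hsplit : ∑ p ∈ Finset.HasAntidiagonal.antidiagonal m, coeff (R := ℤ) p.1 (F - 1) * coeff (R := ℤ) p.2 B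
      = coeff (R := ℤ) m (F - 1) * coeff (R := ℤ) 0 B
        + ∑ p ∈ (Finset.HasAntidiagonal.antidiagonal m).erase (m, 0), coeff (R := ℤ) p.1 (F - 1) * coeff (R := ℤ) p.2 B :=
    (Finset.add_sum_erase _ _ hmem).symm
  rw [hsplit, hB0, mul_one] at hkey
  have h2 : ((l : ℤ) ^ s) ∣ coeff (R := ℤ) m (F - 1) := by
    have := dvd_sub hkey hrest
    simpa using this
  exact h2
end

section
/- The formal power series ∏_{n≥1} (1 - qⁿ)^{25} / (1 - q^{5n})^{5} is congruent to 1 modulo 25 in ℤ[[q]]. -/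
open PowerSeries Finset

lemma aux_pow5 {R : Type*} [CommRing R] (h : (25 : R) = 0) (b c : R) :
    (b + 5 * c) ^ 5 = b ^ 5 := by
  linear_combination (c*b^4 + 10*c^2*b^3 + 50*c^3*b^2 + 125*c^4*b + 125*c^5) * h

lemma aux_25_zero : (25 : PowerSeries (ZMod 25)) = 0 := by
  rw [← map_ofNat (PowerSeries.C (R := ZMod 25)) 25, show (25 : ZMod 25) = 0 by decide, map_zero]

lemma aux_key (n : ℕ) :
    ((1 - X ^ n) ^ 25 : PowerSeries (ZMod 25)) = (1 - X ^ (5 * n)) ^ 5 := by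
  have hy : ∀ k : ℕ, (X : PowerSeries (ZMod 25)) ^ (k * n) = (X ^ n) ^ k := by
    intro k; rw [mul_comm, pow_mul]
  have h5 : ((1 - X ^ n) ^ 5 : PowerSeries (ZMod 25))
      = (1 - X ^ (5 * n)) + 5 * (-(X ^ n) + 2 * X ^ (2 * n) - 2 * X ^ (3 * n) + X ^ (4 * n)) := by
    rw [hy 5, hy 2, hy 3, hy 4]; ring
  calc ((1 - X ^ n) ^ 25 : PowerSeries (ZMod 25)) = ((1 - X ^ n) ^ 5) ^ 5 := by ring
    _ = ((1 - X ^ (5 * n)) + 5 * (-(X ^ n) + 2 * X ^ (2 * n) - 2 * X ^ (3 * n) + X ^ (4 * n))) ^ 5 := by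
        rw [h5]
    _ = (1 - X ^ (5 * n)) ^ 5 := aux_pow5 aux_25_zero _ _

/-- The formal power series `∏_{n≥1} (1-qⁿ)^{25} / (1-q^{5n})^{5}` (encoded
coefficientwise via truncated products) is congruent to `1` modulo `25` in `ℤ[[q]]`. -/
theorem stmt_6 (F : PowerSeries ℤ)
    (hF : ∀ N : ℕ, ∀ m ≤ N,
      coeff (R := ℤ) m (F * ∏ n ∈ Finset.Icc 1 N, (1 - X ^ (5 * n)) ^ 5)
        = coeff (R := ℤ) m (∏ n ∈ Finset.Icc 1 N, (1 - X ^ n) ^ 25)) :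
    ∀ m : ℕ, (25 : ℤ) ∣ coeff (R := ℤ) m (F - 1) := by
  set φ : ℤ →+* ZMod 25 := Int.castRingHom (ZMod 25)
  set G : PowerSeries (ZMod 25) := PowerSeries.map φ F with hGdef
  have hG : ∀ N : ℕ, ∀ m ≤ N,
      coeff (R := ZMod 25) m (G * ∏ n ∈ Finset.Icc 1 N, (1 - X ^ (5 * n)) ^ 5)
        = coeff (R := ZMod 25) m (∏ n ∈ Finset.Icc 1 N, (1 - X ^ (5 * n)) ^ 5) := by
    intro N m hm
    have := congrArg φ (hF N m hm)
    rw [← coeff_map, ← coeff_map] at this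
    have hmapP : PowerSeries.map φ (∏ n ∈ Finset.Icc 1 N, ((1 : PowerSeries ℤ) - X ^ (5 * n)) ^ 5)
        = ∏ n ∈ Finset.Icc 1 N, ((1 : PowerSeries (ZMod 25)) - X ^ (5 * n)) ^ 5 := by
      rw [map_prod]; exact Finset.prod_congr rfl (by intro n _; simp)
    have hmapQ : PowerSeries.map φ (∏ n ∈ Finset.Icc 1 N, ((1 : PowerSeries ℤ) - X ^ n) ^ 25)
        = ∏ n ∈ Finset.Icc 1 N, ((1 : PowerSeries (ZMod 25)) - X ^ (5 * n)) ^ 5 := by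
      rw [map_prod]
      exact Finset.prod_congr rfl (by intro n _; simpa using aux_key n)
    rw [map_mul, hmapP, hmapQ] at this
    exact this
  have main : ∀ m : ℕ, coeff (R := ZMod 25) m (G - 1) = 0 := by
    intro m
    induction m using Nat.strong_induction_on with
    | _ m ih =>
      set P : PowerSeries (ZMod 25) := ∏ n ∈ Finset.Icc 1 m, (1 - X ^ (5 * n)) ^ 5 with hPdef
      have hP0 : coeff (R := ZMod 25) 0 P = 1 := by
        rw [coeff_zero_eq_constantCoeff, hPdef, map_prod]
        refine Finset.prod_eq_one ?_
        intro n hn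
        have hn1 : 1 ≤ n := (Finset.mem_Icc.mp hn).1
        have : 5 * n ≠ 0 := by positivity
        simp [this]
      have hcoe : coeff (R := ZMod 25) m ((G - 1) * P) = 0 := by
        rw [sub_mul, one_mul, map_sub, hG m m le_rfl, sub_self]
      rw [coeff_mul, Finset.sum_eq_single (m, 0)] at hcoe
      · simpa [hP0] using hcoe
      · intro p hp hne
        have hpm : p.1 + p.2 = m := Finset.HasAntidiagonal.mem_antidiagonal.mp hp
        have hlt : p.1 < m := by
          rcases lt_or_eq_of_le (Nat.le.intro hpm) with h | h
          · exact h
          · exfalso; apply hne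
            have : p.2 = 0 := by omega
            exact Prod.ext h this
        rw [ih p.1 hlt, zero_mul]
      · intro h
        exact absurd (Finset.HasAntidiagonal.mem_antidiagonal.mpr (by simp)) h
  intro m
  have h := main m
  rw [hGdef, ← (PowerSeries.map φ).map_one, ← map_sub, coeff_map] at h
  exact (ZMod.intCast_zmod_eq_zero_iff_dvd _ 25).mp h
end

section
/- Let r(n) be defined by ∑ r(n) qⁿ = q^{41} · ∏_{n≥1} 1/((1-q^{3n})(1-qⁿ)³) · ∏_{n≥1} (1-q^{45n})^{13}(1-q^{135n})³ · ∏_{n≥1} (1-qⁿ)^{1250}/(1-q^{5n})^{250}, and let a(n) be defined by ∑ a(n) qⁿ = ∏_{n≥1} 1/((1-q^{3n})(1-qⁿ)³). If r(m) ≡ 0 (mod 625) whenever m ≡ 9, 18, 27, 36 (mod 45), then a(m) ≡ 0 (mod 625) whenever m ≡ 13, 22, 31, 40 (mod 45). -/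
open PowerSeries Finset

private lemma aux_s1 {R : Type*} [CommRing R] (b c : R) :
    ∃ d, (b + 5*c)^5 = b^5 + 25*d :=
  ⟨b^4*c + 10*b^3*c^2 + 50*b^2*c^3 + 125*b*c^4 + 125*c^5, by ring⟩

private lemma aux_s2 {R : Type*} [CommRing R] (b c : R) :
    ∃ d, (b + 25*c)^5 = b^5 + 125*d :=
  ⟨b^4*c + 50*b^3*c^2 + 1250*b^2*c^3 + 15625*b*c^4 + 78125*c^5, by ring⟩

private lemma aux_s3 {R : Type*} [CommRing R] (b c : R) :
    ∃ d, (b + 125*c)^5 = b^5 + 625*d :=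
  ⟨b^4*c + 250*b^3*c^2 + 31250*b^2*c^3 + 1953125*b*c^4 + 48828125*c^5, by ring⟩

private lemma key625 {R : Type*} [CommRing R] (h : (625 : R) = 0) (y : R) :
    (1 - y)^1250 = (1 - y^5)^250 := by
  have h1 : (1-y)^5 = (1-y^5) + 5 * (-y + 2*y^2 - 2*y^3 + y^4) := by ring
  obtain ⟨d2, h2⟩ := aux_s1 (1-y^5) (-y + 2*y^2 - 2*y^3 + y^4)
  rw [← h1] at h2
  have e2 : (1-y)^25 = (1-y^5)^5 + 25*d2 := by
    rw [show (25:ℕ) = 5*5 from rfl, pow_mul, h2]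
  obtain ⟨d3, h3⟩ := aux_s2 ((1-y^5)^5) d2
  rw [← e2] at h3
  have e3 : (1-y)^125 = (1-y^5)^25 + 125*d3 := by
    rw [show (125:ℕ) = 25*5 from rfl, pow_mul, h3, ← pow_mul]
  obtain ⟨d4, h4⟩ := aux_s3 ((1-y^5)^25) d3
  rw [← e3] at h4
  have e4 : (1-y)^625 = (1-y^5)^125 := by
    rw [show (625:ℕ) = 125*5 from rfl, pow_mul, h4, ← pow_mul, h, zero_mul, add_zero]
  rw [show (1250:ℕ) = 625*2 from rfl, pow_mul, e4, ← pow_mul]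

private lemma zmod625_zero : (625 : (ZMod 625)⟦X⟧) = 0 := by
  have : (625 : (ZMod 625)⟦X⟧) = C (625 : ZMod 625) :=
    (map_ofNat (C) 625).symm
  rw [this, show (625 : ZMod 625) = 0 from by decide, map_zero]

/-- vanishing of coefficients at non-multiples of 45 is preserved by mul -/
private lemma struct_mul {f g : (ZMod 625)⟦X⟧}
    (hf : ∀ i, ¬ (45 ∣ i) → coeff i f = 0)
    (hg : ∀ i, ¬ (45 ∣ i) → coeff i g = 0) :
    ∀ i, ¬ (45 ∣ i) → coeff i (f * g) = 0 := by
  intro i hi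
  rw [coeff_mul]
  apply Finset.sum_eq_zero
  intro p hp
  rw [Finset.HasAntidiagonal.mem_antidiagonal] at hp
  by_cases h1 : 45 ∣ p.1
  · have : ¬ (45 ∣ p.2) := by omega
    rw [hg p.2 this, mul_zero]
  · rw [hf p.1 h1, zero_mul]

private lemma struct_one :
    ∀ i, ¬ (45 ∣ i) → coeff i (1 : (ZMod 625)⟦X⟧) = 0 := by
  intro i hi
  have : i ≠ 0 := by omega
  simp [coeff_one, this]

private lemma struct_pow {f : (ZMod 625)⟦X⟧}
    (hf : ∀ i, ¬ (45 ∣ i) → coeff i f = 0) (k : ℕ) :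
    ∀ i, ¬ (45 ∣ i) → coeff i (f ^ k) = 0 := by
  induction k with
  | zero => simpa using struct_one
  | succ k ih => rw [pow_succ]; exact struct_mul ih hf

private lemma struct_base {k : ℕ} (hk : 45 ∣ k) :
    ∀ i, ¬ (45 ∣ i) → coeff i (1 - X ^ k : (ZMod 625)⟦X⟧) = 0 := by
  intro i hi
  have h0 : i ≠ 0 := by omega
  have h1 : i ≠ k := by rintro rfl; exact hi hk
  simp [map_sub, coeff_one, coeff_X_pow, h0, h1]

private lemma struct_E (N : ℕ) :
    ∀ i, ¬ (45 ∣ i) → coeff i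
      (∏ n ∈ Icc 1 N, ((1 - X^(45*n))^13 * (1 - X^(135*n))^3) : (ZMod 625)⟦X⟧) = 0 := by
  refine Finset.prod_induction _
    (fun f => ∀ i, ¬ (45 ∣ i) → coeff i f = 0)
    (fun f g hf hg => struct_mul hf hg) struct_one ?_
  intro n _
  exact struct_mul (struct_pow (struct_base ⟨n, rfl⟩) 13)
    (struct_pow (struct_base ⟨3*n, by ring⟩) 3)

private lemma const_E (N : ℕ) :
    coeff 0
      (∏ n ∈ Icc 1 N, ((1 - X^(45*n))^13 * (1 - X^(135*n))^3) : (ZMod 625)⟦X⟧) = 1 := by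
  rw [coeff_zero_eq_constantCoeff, map_prod]
  apply Finset.prod_eq_one
  intro n hn
  rw [Finset.mem_Icc] at hn
  have h1 : 45*n ≠ 0 := by omega
  have h2 : 135*n ≠ 0 := by omega
  simp [map_mul, map_pow, map_sub, constantCoeff_X, zero_pow, h1, h2]

private lemma unit_C (N : ℕ) :
    IsUnit (∏ n ∈ Icc 1 N, (1 - X^(5*n))^250 : (ZMod 625)⟦X⟧) := by
  rw [PowerSeries.isUnit_iff_constantCoeff, map_prod]
  have : ∀ n ∈ Icc 1 N,
      (constantCoeff) ((1 - X^(5*n))^250 : (ZMod 625)⟦X⟧) = 1 := by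
    intro n hn
    rw [Finset.mem_Icc] at hn
    have h1 : 5*n ≠ 0 := by omega
    simp [map_pow, map_sub, constantCoeff_X, zero_pow, h1]
  rw [Finset.prod_congr rfl this, Finset.prod_const_one]
  exact isUnit_one

/-- Let `r(n)` be defined by
`∑ r(n) qⁿ = q^{41} · ∏ 1/((1-q^{3n})(1-qⁿ)³) · ∏ (1-q^{45n})^{13}(1-q^{135n})³ ·
∏ (1-qⁿ)^{1250}/(1-q^{5n})^{250}` and let `a(n)` be defined by
`∑ a(n) qⁿ = ∏ 1/((1-q^{3n})(1-qⁿ)³)` (all encoded coefficientwise via truncated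
products).  If `r(m) ≡ 0 (mod 625)` whenever `m ≡ 9, 18, 27, 36 (mod 45)`, then
`a(m) ≡ 0 (mod 625)` whenever `m ≡ 13, 22, 31, 40 (mod 45)`. -/
theorem stmt_8 (r a : ℕ → ℤ)
    (ha : ∀ N : ℕ, ∀ m ≤ N,
      coeff m (PowerSeries.mk a *
        ∏ n ∈ Finset.Icc 1 N, ((1 - X ^ (3 * n)) * (1 - X ^ n) ^ 3))
        = coeff m (1 : PowerSeries ℤ))
    (hr : ∀ N : ℕ, ∀ m ≤ N,
      coeff m (PowerSeries.mk r *
        (∏ n ∈ Finset.Icc 1 N, ((1 - X ^ (3 * n)) * (1 - X ^ n) ^ 3)) *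
        ∏ n ∈ Finset.Icc 1 N, (1 - X ^ (5 * n)) ^ 250)
        = coeff m ((X : PowerSeries ℤ) ^ 41 *
            (∏ n ∈ Finset.Icc 1 N, ((1 - X ^ (45 * n)) ^ 13 * (1 - X ^ (135 * n)) ^ 3)) *
            ∏ n ∈ Finset.Icc 1 N, (1 - X ^ n) ^ 1250))
    (hrdvd : ∀ m : ℕ, (m % 45 = 9 ∨ m % 45 = 18 ∨ m % 45 = 27 ∨ m % 45 = 36) →
      (625 : ℤ) ∣ r m) :
    ∀ m : ℕ, (m % 45 = 13 ∨ m % 45 = 22 ∨ m % 45 = 31 ∨ m % 45 = 40) →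
      (625 : ℤ) ∣ a m := by
  set ρ : ℤ →+* ZMod 625 := Int.castRingHom (ZMod 625) with hρ
  set Φ : PowerSeries ℤ →+* (ZMod 625)⟦X⟧ := PowerSeries.map ρ with hΦ
  -- abbreviations on the ZMod side
  set aa : ℕ → ZMod 625 := fun n => ((a n : ZMod 625)) with haa
  set ra : ℕ → ZMod 625 := fun n => ((r n : ZMod 625)) with hra
  set Fz : ℕ → (ZMod 625)⟦X⟧ :=
    fun N => ∏ n ∈ Icc 1 N, ((1 - X^(3*n)) * (1 - X^n)^3) with hFz
  set Ez : ℕ → (ZMod 625)⟦X⟧ :=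
    fun N => ∏ n ∈ Icc 1 N, ((1 - X^(45*n))^13 * (1 - X^(135*n))^3) with hEz
  set Cz : ℕ → (ZMod 625)⟦X⟧ :=
    fun N => ∏ n ∈ Icc 1 N, (1 - X^(5*n))^250 with hCz
  have hmka : Φ (PowerSeries.mk a) = PowerSeries.mk aa := by
    ext n; simp [hΦ, coeff_map, haa, hρ]
  have hmkr : Φ (PowerSeries.mk r) = PowerSeries.mk ra := by
    ext n; simp [hΦ, coeff_map, hra, hρ]
  -- cast version of ha
  have haZ : ∀ N : ℕ, ∀ m ≤ N,
      coeff m (PowerSeries.mk aa * Fz N) = coeff m 1 := by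
    intro N m hm
    have := congrArg ρ (ha N m hm)
    rw [show ρ (coeff m (PowerSeries.mk a * ∏ n ∈ Icc 1 N,
        ((1 - X ^ (3*n)) * (1 - X ^ n)^3))) = coeff m (Φ (PowerSeries.mk a *
        ∏ n ∈ Icc 1 N, ((1 - X ^ (3*n)) * (1 - X ^ n)^3))) from (coeff_map _ _ _).symm,
      show ρ (coeff m (1 : PowerSeries ℤ)) = coeff m (Φ 1) from
        (coeff_map _ _ _).symm] at this
    rw [map_mul, hmka, map_prod] at this
    simpa [hΦ, hFz, map_sub, map_pow, PowerSeries.map_X] using this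
  -- cast version of hr, with (1-X^n)^1250 replaced by (1-X^(5n))^250
  have hrZ : ∀ N : ℕ, ∀ m ≤ N,
      coeff m (PowerSeries.mk ra * Fz N * Cz N)
        = coeff m ((X : (ZMod 625)⟦X⟧)^41 * Ez N * Cz N) := by
    intro N m hm
    have := congrArg ρ (hr N m hm)
    rw [show ρ (coeff m (PowerSeries.mk r * (∏ n ∈ Icc 1 N,
          ((1 - X ^ (3*n)) * (1 - X ^ n)^3)) * ∏ n ∈ Icc 1 N, (1 - X ^ (5*n))^250))
        = coeff m (Φ (PowerSeries.mk r * (∏ n ∈ Icc 1 N,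
          ((1 - X ^ (3*n)) * (1 - X ^ n)^3)) * ∏ n ∈ Icc 1 N, (1 - X ^ (5*n))^250))
        from (coeff_map _ _ _).symm,
      show ρ (coeff m ((X : PowerSeries ℤ)^41 * (∏ n ∈ Icc 1 N,
          ((1 - X ^ (45*n))^13 * (1 - X ^ (135*n))^3)) * ∏ n ∈ Icc 1 N, (1 - X ^ n)^1250))
        = coeff m (Φ ((X : PowerSeries ℤ)^41 * (∏ n ∈ Icc 1 N,
          ((1 - X ^ (45*n))^13 * (1 - X ^ (135*n))^3)) * ∏ n ∈ Icc 1 N, (1 - X ^ n)^1250))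
        from (coeff_map _ _ _).symm] at this
    simp only [map_mul, map_prod, map_pow, map_sub, map_one, PowerSeries.map_X, hmkr,
      hΦ] at this
    have hDC : (∏ n ∈ Icc 1 N, (1 - X^n)^1250 : (ZMod 625)⟦X⟧) = Cz N := by
      apply Finset.prod_congr rfl
      intro n _
      have := key625 zmod625_zero (X^n : (ZMod 625)⟦X⟧)
      rw [← pow_mul, Nat.mul_comm n 5] at this
      exact this
    rw [hDC] at this
    exact this
  -- cancel the unit Cz N
  have hrZ' : ∀ N : ℕ, ∀ m ≤ N,
      coeff m (PowerSeries.mk ra * Fz N)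
        = coeff m ((X : (ZMod 625)⟦X⟧)^41 * Ez N) := by
    intro N m hm
    have hdvd : (X : (ZMod 625)⟦X⟧)^(N+1) ∣
        (PowerSeries.mk ra * Fz N - (X : (ZMod 625)⟦X⟧)^41 * Ez N) * Cz N := by
      rw [PowerSeries.X_pow_dvd_iff]
      intro k hk
      rw [sub_mul, map_sub, hrZ N k (by omega), sub_self]
    rw [(unit_C N).dvd_mul_right] at hdvd
    have := (PowerSeries.X_pow_dvd_iff.1 hdvd) m (by omega)
    rw [map_sub, sub_eq_zero] at this
    exact this
  -- main relation: ra = X^41 * Ez N * mk aa  up to coefficient N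
  have hmain : ∀ N : ℕ, ∀ m ≤ N,
      coeff m (PowerSeries.mk ra)
        = coeff m ((X : (ZMod 625)⟦X⟧)^41 * (Ez N * PowerSeries.mk aa)) := by
    intro N m hm
    have d1 : (X : (ZMod 625)⟦X⟧)^(N+1) ∣
        (PowerSeries.mk ra * Fz N - (X : (ZMod 625)⟦X⟧)^41 * Ez N) := by
      rw [PowerSeries.X_pow_dvd_iff]
      intro k hk
      rw [map_sub, hrZ' N k (by omega), sub_self]
    have d2 : (X : (ZMod 625)⟦X⟧)^(N+1) ∣ (PowerSeries.mk aa * Fz N - 1) := by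
      rw [PowerSeries.X_pow_dvd_iff]
      intro k hk
      rw [map_sub, haZ N k (by omega), sub_self]
    have d3 : (X : (ZMod 625)⟦X⟧)^(N+1) ∣
        (PowerSeries.mk ra - (X : (ZMod 625)⟦X⟧)^41 * (Ez N * PowerSeries.mk aa)) := by
      have heq : PowerSeries.mk ra - (X : (ZMod 625)⟦X⟧)^41 * (Ez N * PowerSeries.mk aa)
          = (PowerSeries.mk ra) * (-(PowerSeries.mk aa * Fz N - 1))
            + (PowerSeries.mk aa) *
              (PowerSeries.mk ra * Fz N - (X : (ZMod 625)⟦X⟧)^41 * Ez N) := by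
        ring
      rw [heq]
      exact dvd_add (Dvd.dvd.mul_left (dvd_neg.2 d2) _) (Dvd.dvd.mul_left d1 _)
    have := (PowerSeries.X_pow_dvd_iff.1 d3) m (by omega)
    rw [map_sub, sub_eq_zero] at this
    exact this
  -- final strong induction
  intro m
  induction m using Nat.strong_induction_on with
  | _ m ih =>
    intro hm
    suffices hz : ((a m : ZMod 625)) = 0 by
      exact_mod_cast (ZMod.intCast_zmod_eq_zero_iff_dvd (a m) 625).1 hz
    have h0 : ra (m+41) = 0 := by
      rw [hra]
      simp only []
      exact (ZMod.intCast_zmod_eq_zero_iff_dvd _ 625).2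
        (by exact_mod_cast hrdvd _ (by omega))
    have hs := hmain (m+41) (m+41) le_rfl
    rw [coeff_mk, h0, coeff_X_pow_mul, coeff_mul] at hs
    have hsum : ∑ p ∈ antidiagonal m,
        coeff p.1 (Ez (m+41)) * coeff p.2 (PowerSeries.mk aa)
        = ((a m : ZMod 625)) := by
      rw [Finset.sum_eq_single (0, m)]
      · rw [coeff_mk]
        have : coeff 0 (Ez (m+41)) = 1 := const_E (m+41)
        rw [this, one_mul]
      · intro p hp hne
        rw [Finset.HasAntidiagonal.mem_antidiagonal] at hp
        by_cases h45 : 45 ∣ p.1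
        · have hp1 : p.1 ≠ 0 := by
            intro h00
            apply hne
            have : p.2 = m := by omega
            calc p = (p.1, p.2) := rfl
              _ = (0, m) := by rw [h00, this]
          have hdvd : (625 : ℤ) ∣ a p.2 := by
            apply ih p.2 (by omega)
            omega
          rw [coeff_mk]
          have : ((a p.2 : ZMod 625)) = 0 :=
            (ZMod.intCast_zmod_eq_zero_iff_dvd _ 625).2 (by exact_mod_cast hdvd)
          rw [haa] at *
          simp only [] at this ⊢
          rw [this, mul_zero]
        · rw [struct_E (m+41) p.1 h45, zero_mul]
      · intro hni
        exact absurd (Finset.HasAntidiagonal.mem_antidiagonal.2 (by simp)) hni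
    rw [hsum] at hs
    exact hs.symm
end

section
/- The formal power series ∏_{n≥1} (1 - qⁿ)^{625} / (1 - q^{5n})^{125} is congruent to 1 modulo 625 in ℤ[[q]]. -/
open PowerSeries Finset


lemma step5 {R : Type*} [CommRing R] (a b c : R) (j : ℕ) (h : a = b + 5^(j+1)*c) :
    ∃ d, a^5 = b^5 + 5^(j+2)*d := by
  refine ⟨b^4*c + 2*5^(j+1)*b^3*c^2 + 2*5^(2*j+2)*b^2*c^3 + 5^(3*j+3)*b*c^4 + 5^(4*j+3)*c^5, ?_⟩
  subst h; ring

lemma key5 {R : Type*} [CommRing R] (y : R) : ∃ f : R, (1-y)^625 = (1-y^5)^125 + 5^4*f := by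
  have h0 : (1-y)^5 = (1-y^5) + 5^1*(-y+2*y^2-2*y^3+y^4) := by ring
  obtain ⟨d, hd⟩ := step5 _ _ _ 0 h0
  obtain ⟨e, he⟩ := step5 _ _ _ 1 hd
  obtain ⟨f, hf⟩ := step5 _ _ _ 2 he
  refine ⟨f, ?_⟩
  have e1 : (1-y)^625 = ((((1-y)^5)^5)^5)^5 := by rw [← pow_mul, ← pow_mul, ← pow_mul]
  have e2 : (1-y^5)^125 = (((1-y^5)^5)^5)^5 := by rw [← pow_mul, ← pow_mul]
  rw [e1, e2, hf]



/-- The formal power series `∏_{n≥1} (1-qⁿ)^{625} / (1-q^{5n})^{125}` (encoded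
coefficientwise via truncated products) is congruent to `1` modulo `625` in `ℤ[[q]]`. -/
theorem stmt_9 (F : PowerSeries ℤ)
    (hF : ∀ N : ℕ, ∀ m ≤ N,
      coeff (R := ℤ) m (F * ∏ n ∈ Finset.Icc 1 N, (1 - X ^ (5 * n)) ^ 125)
        = coeff (R := ℤ) m (∏ n ∈ Finset.Icc 1 N, (1 - X ^ n) ^ 625)) :
    ∀ m : ℕ, (625 : ℤ) ∣ coeff (R := ℤ) m (F - 1) := by
  set φ : PowerSeries ℤ →+* PowerSeries (ZMod 625) :=
    PowerSeries.map (Int.castRingHom (ZMod 625)) with hφ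
  -- 625 = 0 in the target ring
  have h625 : ((5:PowerSeries (ZMod 625)))^4 = 0 := by
    have : ((5:PowerSeries (ZMod 625)))^4 = C (R := ZMod 625) ((5:ZMod 625)^4) := by
      rw [map_pow, map_ofNat]
    rw [this, show ((5:ZMod 625)^4) = 0 from by decide, map_zero]
  -- the key series identity over ZMod 625
  have key : ∀ n : ℕ, ((1 - X^n)^625 : PowerSeries (ZMod 625)) = (1 - X^(5*n))^125 := by
    intro n
    obtain ⟨f, hf⟩ := key5 (X^n : PowerSeries (ZMod 625))
    rw [hf, ← pow_mul, mul_comm n 5, h625, zero_mul, add_zero]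
  -- main claim: all coefficients of φ (F - 1) vanish
  have main : ∀ m : ℕ, coeff (R := ZMod 625) m (φ (F - 1)) = 0 := by
    intro m
    induction m using Nat.strong_induction_on with
    | _ m ih =>
      set P : PowerSeries (ZMod 625) := ∏ n ∈ Finset.Icc 1 m, (1 - X^(5*n))^125 with hP
      have hφP : φ (∏ n ∈ Finset.Icc 1 m, ((1 - X^(5*n))^125 : PowerSeries ℤ)) = P := by
        rw [map_prod]
        refine Finset.prod_congr rfl fun n _ => ?_
        simp [hφ, PowerSeries.map_X]
      have hφQ : φ (∏ n ∈ Finset.Icc 1 m, ((1 - X^n)^625 : PowerSeries ℤ)) = P := by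
        rw [map_prod]
        refine Finset.prod_congr rfl fun n _ => ?_
        rw [map_pow, map_sub, map_one, map_pow, PowerSeries.map_X, key]
      -- coefficient equation mod 625
      have hc : coeff (R := ZMod 625) m (φ (F - 1) * P) = 0 := by
        have h1 := hF m m le_rfl
        have h2 : coeff (R := ZMod 625) m (φ F * P) = coeff (R := ZMod 625) m P := by
          have := congrArg (Int.castRingHom (ZMod 625)) h1
          rwa [← PowerSeries.coeff_map, ← PowerSeries.coeff_map, map_mul, hφP, hφQ] at this
        rw [map_sub, sub_mul, map_sub, map_one, one_mul, h2, sub_self]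
      -- constant coefficient of P is 1
      have hP0 : coeff (R := ZMod 625) 0 P = 1 := by
        rw [coeff_zero_eq_constantCoeff, hP, map_prod]
        refine Finset.prod_eq_one fun n hn => ?_
        have hn1 : 1 ≤ n := (Finset.mem_Icc.mp hn).1
        rw [map_pow, map_sub, map_one, map_pow, constantCoeff_X, zero_pow (by omega), sub_zero,
          one_pow]
      -- extract coeff m (φ (F-1)) from the product
      rw [PowerSeries.coeff_mul] at hc
      rw [← hc]
      symm
      refine Finset.sum_eq_single_of_mem (m, 0) (Finset.HasAntidiagonal.mem_antidiagonal.mpr (by simp)) ?_ |>.trans ?_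
      · rintro ⟨i, j⟩ hb hne
        have hij : i + j = m := Finset.HasAntidiagonal.mem_antidiagonal.mp hb
        have hj : j ≠ 0 := by rintro rfl; exact hne (by simp [← hij])
        have : i < m := by omega
        simp only [ih i this, zero_mul]
      · simp only [hP0, mul_one]
  intro m
  have h := main m
  rw [hφ, PowerSeries.coeff_map] at h
  exact (ZMod.intCast_zmod_eq_zero_iff_dvd _ _).mp h
end
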